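/- arXiv:2509.10626 — 4 statements merged into one kernel-verified Lean document; each statement's English description precedes it below -/
import Mathlib

section
/- Chain rule factorization of a joint distribution at a cut vertex: let M be a probability tensor on Fin n₁ × ⋯ × Fin n_s whose marginals are μ_σ, and suppose the index set {1,...,s} is partitioned as V₁ ∪ V₂ with V₁ ∩ V₂ = {σ}. If M satisfies the conditional independence M_{i} = proj_{V₁}(M)_{i_{V₁}} · proj_{V₂}(M)_{i_{V₂}} / μ_σ(i_σ) whenever μ_σ(i_σ) > 0, then D_KL(M ∥ K₁ ⊗ K₂) = D_KL(proj_{V₁}(M) ∥ K₁) + D_KL(proj_{V₂}(M) ∥ K₂) + H(μ_σ), where H(μ) = -Σ_r μ(r) log μ(r), and K₁, K₂ depend only on the coordinates in V₁ and V₂ respectively, with (K₁ ⊗ K₂)_i = (K₁)_{i_{V₁}} · (K₂)_{i_{V₂}}. -/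
/-- Chain rule factorization of KL divergence at a cut vertex. -/
theorem kl_decomposition_at_cut {A B C : Type*} [Fintype A] [Fintype B] [Fintype C]
    (M : A × B × C → ℝ) (μ : B → ℝ) (K₁ : A × B → ℝ) (K₂ : B × C → ℝ)
    (hK₁ : ∀ p, 0 < K₁ p) (hK₂ : ∀ p, 0 < K₂ p)
    (hM0 : ∀ p, 0 ≤ M p) (hM1 : ∑ p, M p = 1)
    (hμpos : ∀ b, 0 < μ b)
    (hμ : ∀ b, ∑ a, ∑ c, M (a, b, c) = μ b)
    (M₁ : A × B → ℝ) (hM₁ : ∀ a b, M₁ (a, b) = ∑ c, M (a, b, c))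
    (M₂ : B × C → ℝ) (hM₂ : ∀ b c, M₂ (b, c) = ∑ a, M (a, b, c))
    (hci : ∀ a b c, M (a, b, c) = M₁ (a, b) * M₂ (b, c) / μ b) :
    ∑ p, M p * Real.log (M p / (K₁ (p.1, p.2.1) * K₂ (p.2.1, p.2.2)))
      = (∑ q, M₁ q * Real.log (M₁ q / K₁ q))
        + (∑ q, M₂ q * Real.log (M₂ q / K₂ q))
        + (-∑ b, μ b * Real.log (μ b)) := by
  have key : ∀ a b c, M (a, b, c) * Real.log (M (a, b, c) / (K₁ (a, b) * K₂ (b, c)))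
      = M (a, b, c) * (Real.log (M₁ (a, b) / K₁ (a, b))
          + Real.log (M₂ (b, c) / K₂ (b, c)) - Real.log (μ b)) := by
    intro a b c
    rcases eq_or_lt_of_le (hM0 (a, b, c)) with h0 | hpos
    · rw [← h0, zero_mul, zero_mul]
    · have h₁ : 0 < M₁ (a, b) := by
        rw [hM₁]
        exact lt_of_lt_of_le hpos
          (Finset.single_le_sum (fun c' _ => hM0 (a, b, c')) (Finset.mem_univ c))
      have h₂ : 0 < M₂ (b, c) := by
        rw [hM₂]
        exact lt_of_lt_of_le hpos
          (Finset.single_le_sum (fun a' _ => hM0 (a', b, c)) (Finset.mem_univ a))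
      have hb := hμpos b
      congr 1
      rw [hci a b c,
        Real.log_div (div_pos (mul_pos h₁ h₂) hb).ne' (mul_pos (hK₁ _) (hK₂ _)).ne',
        Real.log_div (mul_pos h₁ h₂).ne' hb.ne',
        Real.log_div h₁.ne' (hK₁ _).ne', Real.log_div h₂.ne' (hK₂ _).ne',
        Real.log_mul h₁.ne' h₂.ne', Real.log_mul (hK₁ _).ne' (hK₂ _).ne']
      ring
  have S1 : ∑ p : A × B × C, M p * Real.log (M₁ (p.1, p.2.1) / K₁ (p.1, p.2.1))
      = ∑ q, M₁ q * Real.log (M₁ q / K₁ q) := by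
    simp only [Fintype.sum_prod_type]
    refine Finset.sum_congr rfl fun a _ => ?_
    refine Finset.sum_congr rfl fun b _ => ?_
    rw [← Finset.sum_mul, ← hM₁]
  have S2 : ∑ p : A × B × C, M p * Real.log (M₂ (p.2.1, p.2.2) / K₂ (p.2.1, p.2.2))
      = ∑ q, M₂ q * Real.log (M₂ q / K₂ q) := by
    simp only [Fintype.sum_prod_type]
    rw [Finset.sum_comm]
    refine Finset.sum_congr rfl fun b _ => ?_
    rw [Finset.sum_comm]
    refine Finset.sum_congr rfl fun c _ => ?_
    rw [← Finset.sum_mul, ← hM₂]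
  have S3 : ∑ p : A × B × C, M p * Real.log (μ p.2.1)
      = ∑ b, μ b * Real.log (μ b) := by
    simp only [Fintype.sum_prod_type]
    rw [Finset.sum_comm]
    refine Finset.sum_congr rfl fun b _ => ?_
    simp_rw [← Finset.sum_mul]
    rw [hμ]
  calc ∑ p, M p * Real.log (M p / (K₁ (p.1, p.2.1) * K₂ (p.2.1, p.2.2)))
      = ∑ p : A × B × C, (M p * Real.log (M₁ (p.1, p.2.1) / K₁ (p.1, p.2.1))
          + M p * Real.log (M₂ (p.2.1, p.2.2) / K₂ (p.2.1, p.2.2))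
          - M p * Real.log (μ p.2.1)) := by
        refine Finset.sum_congr rfl fun p _ => ?_
        obtain ⟨a, b, c⟩ := p
        rw [key a b c]; ring
    _ = _ := by
        rw [Finset.sum_sub_distrib, Finset.sum_add_distrib, S1, S2, S3]
        ring
end

section
/- Tree-structured optimal coupling decomposition (two subtrees): let T be a tree on vertices {1,...,s} with strictly positive vertex marginals μ_σ, split at a non-leaf vertex σ into subtrees T₁ = (V₁, E₁) and T₂ = (V₂, E₂) with V₁ ∩ V₂ = {σ}. Let K, K₁, K₂ be the Gibbs kernels exp(-C/η) where C decomposes additively over the edges of T, T₁, T₂ respectively, so that K_i = (K₁)_{i_{V₁}} · (K₂)_{i_{V₂}}. Then the minimizer M*_T of D_KL(M ∥ K) over couplings M with marginals {μ_σ} satisfies (M*_T)_i = (M*_{T₁})_{i_{V₁}} · (M*_{T₂})_{i_{V₂}} / μ_σ(i_σ), where M*_{T_k} minimizes D_KL(· ∥ K_k) over couplings with marginals {μ_τ : τ ∈ V_k}. -/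
namespace TreeCouplingAux


variable {s : ℕ} {n : Fin s → ℕ} {V₁ V₂ : Finset (Fin s)}

def glue (hcover : V₁ ∪ V₂ = Finset.univ)
    (j₁ : (τ : V₁) → Fin (n τ)) (j₂ : (τ : V₂) → Fin (n τ)) (σ : Fin s) : Fin (n σ) :=
  if h : σ ∈ V₁ then j₁ ⟨σ, h⟩ else
    j₂ ⟨σ, by
      have hmem : σ ∈ V₁ ∪ V₂ := hcover ▸ Finset.mem_univ σ
      exact (Finset.mem_union.mp hmem).resolve_left h⟩

lemma glue_restrict (hcover : V₁ ∪ V₂ = Finset.univ) (i : (σ : Fin s) → Fin (n σ)) :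
    glue hcover (fun τ => i τ.1) (fun τ => i τ.1) = i := by
  funext σ
  unfold glue
  split <;> rfl

lemma restrict₁_glue (hcover : V₁ ∪ V₂ = Finset.univ)
    (j₁ : (τ : V₁) → Fin (n τ)) (j₂ : (τ : V₂) → Fin (n τ)) (τ : V₁) :
    glue hcover j₁ j₂ τ.1 = j₁ τ := by
  unfold glue
  rw [dif_pos τ.2]

lemma restrict₂_glue (hcover : V₁ ∪ V₂ = Finset.univ) {σ₀ : Fin s}
    (hcut : V₁ ∩ V₂ = {σ₀}) (h₁ : σ₀ ∈ V₁) (h₂ : σ₀ ∈ V₂)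
    (j₁ : (τ : V₁) → Fin (n τ)) (j₂ : (τ : V₂) → Fin (n τ))
    (hcompat : j₁ ⟨σ₀, h₁⟩ = j₂ ⟨σ₀, h₂⟩) (τ : V₂) :
    glue hcover j₁ j₂ τ.1 = j₂ τ := by
  obtain ⟨σ, hσ⟩ := τ
  unfold glue
  split
  · next h =>
    have hmem : σ ∈ V₁ ∩ V₂ := Finset.mem_inter.mpr ⟨h, hσ⟩
    rw [hcut, Finset.mem_singleton] at hmem
    subst hmem
    exact hcompat
  · rfl

lemma sum_glue (hcover : V₁ ∪ V₂ = Finset.univ) {σ₀ : Fin s}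
    (hcut : V₁ ∩ V₂ = {σ₀}) (h₁ : σ₀ ∈ V₁) (h₂ : σ₀ ∈ V₂)
    (G : ((τ : V₁) → Fin (n τ)) → ((τ : V₂) → Fin (n τ)) → ℝ) :
    ∑ i : (σ : Fin s) → Fin (n σ), G (fun τ => i τ.1) (fun τ => i τ.1)
      = ∑ j₁ : (τ : V₁) → Fin (n τ), ∑ j₂ : (τ : V₂) → Fin (n τ),
          if j₁ ⟨σ₀, h₁⟩ = j₂ ⟨σ₀, h₂⟩ then G j₁ j₂ else 0 := by
  trans (∑ p : (((τ : V₁) → Fin (n τ)) × ((τ : V₂) → Fin (n τ))),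
      if p.1 ⟨σ₀, h₁⟩ = p.2 ⟨σ₀, h₂⟩ then G p.1 p.2 else 0)
  swap
  · rw [Fintype.sum_prod_type]
  rw [← Finset.sum_filter]
  refine Finset.sum_nbij' (fun i => (fun τ => i τ.1, fun τ => i τ.1))
    (fun p => glue hcover p.1 p.2) ?_ ?_ ?_ ?_ ?_
  · intro i _
    simp only [Finset.mem_filter, Finset.mem_univ, true_and]
  · intro p _
    exact Finset.mem_univ _
  · intro i _
    exact glue_restrict hcover i
  · intro p hp
    simp only [Finset.mem_filter, Finset.mem_univ, true_and] at hp
    have e1 := funext (restrict₁_glue hcover p.1 p.2)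
    have e2 := funext (restrict₂_glue hcover hcut h₁ h₂ p.1 p.2 hp)
    exact Prod.ext e1 e2
  · intro i _
    rfl



lemma mul_log_div_expand (x k : ℝ) (hx : 0 ≤ x) (hk : 0 < k) :
    x * Real.log (x / k) = x * Real.log x - x * Real.log k := by
  rcases eq_or_lt_of_le hx with h | h
  · simp [← h]
  · rw [Real.log_div h.ne' hk.ne']; ring

lemma mul_log_ge (m q : ℝ) (hm : 0 ≤ m) (hq : 0 ≤ q) (himp : 0 < m → 0 < q) :
    m - q ≤ m * Real.log (m / q) := by
  rcases eq_or_lt_of_le hm with h | h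
  · simp [← h]; linarith
  · have hq' := himp h
    have hx : 0 < q / m := div_pos hq' h
    have hlog := Real.log_le_sub_one_of_pos hx
    have key : m * Real.log (q / m) ≤ m * (q / m - 1) :=
      mul_le_mul_of_nonneg_left hlog hm
    have e1 : m * (q / m - 1) = q - m := by field_simp
    have e2 : Real.log (m / q) = -Real.log (q / m) := by
      rw [← Real.log_inv]; congr 1; rw [inv_div]
    rw [e2]; nlinarith

lemma mul_log_eq (m q : ℝ) (hm : 0 ≤ m) (hq : 0 ≤ q) (himp : 0 < m → 0 < q)
    (heq : m * Real.log (m / q) = m - q) : m = q := by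
  rcases eq_or_lt_of_le hm with h | h
  · rw [← h] at heq ⊢
    simp at heq; linarith
  · have hq' := himp h
    by_contra hne
    have hx : 0 < q / m := div_pos hq' h
    have hne1 : q / m ≠ 1 := by
      intro h1
      exact hne ((div_eq_one_iff_eq h.ne').mp h1).symm
    have hlog := Real.log_lt_sub_one_of_pos hx hne1
    have key : m * Real.log (q / m) < m * (q / m - 1) :=
      (mul_lt_mul_iff_right₀ h).mpr hlog
    have e1 : m * (q / m - 1) = q - m := by field_simp
    have e2 : Real.log (m / q) = -Real.log (q / m) := by
      rw [← Real.log_inv]; congr 1; rw [inv_div]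
    rw [e2] at heq; nlinarith

lemma midpoint_le (k a b : ℝ) (hk : 0 < k) (ha : 0 ≤ a) (hb : 0 ≤ b) :
    ((a + b) / 2) * Real.log (((a + b) / 2) / k)
      ≤ (a * Real.log (a / k) + b * Real.log (b / k)) / 2 := by
  have hab : 0 ≤ (a + b) / 2 := by positivity
  rw [mul_log_div_expand _ _ ha hk, mul_log_div_expand _ _ hb hk,
    mul_log_div_expand _ _ hab hk]
  have hconv := Real.strictConvexOn_mul_log.convexOn.2 (Set.mem_Ici.mpr ha)
    (Set.mem_Ici.mpr hb) (by norm_num : (0:ℝ) ≤ 1/2) (by norm_num : (0:ℝ) ≤ 1/2)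
    (by norm_num)
  simp only [smul_eq_mul] at hconv
  have e : (1:ℝ)/2 * a + 1/2 * b = (a + b) / 2 := by ring
  rw [e] at hconv
  linarith

lemma midpoint_lt (k a b : ℝ) (hk : 0 < k) (ha : 0 ≤ a) (hb : 0 ≤ b) (hab : a ≠ b) :
    ((a + b) / 2) * Real.log (((a + b) / 2) / k)
      < (a * Real.log (a / k) + b * Real.log (b / k)) / 2 := by
  have hab' : 0 ≤ (a + b) / 2 := by positivity
  rw [mul_log_div_expand _ _ ha hk, mul_log_div_expand _ _ hb hk,
    mul_log_div_expand _ _ hab' hk]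
  have hconv := Real.strictConvexOn_mul_log.2 (Set.mem_Ici.mpr ha)
    (Set.mem_Ici.mpr hb) hab (by norm_num : (0:ℝ) < 1/2) (by norm_num : (0:ℝ) < 1/2)
    (by norm_num)
  simp only [smul_eq_mul] at hconv
  have e : (1:ℝ)/2 * a + 1/2 * b = (a + b) / 2 := by ring
  rw [e] at hconv
  linarith

lemma kl_split (m₁ m₂ u k₁ k₂ : ℝ) (hm₁ : 0 ≤ m₁) (hm₂ : 0 ≤ m₂)
    (hu : 0 < u) (hk₁ : 0 < k₁) (hk₂ : 0 < k₂) :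
    (m₁ * m₂ / u) * Real.log ((m₁ * m₂ / u) / (k₁ * k₂))
      = (m₁ * Real.log (m₁ / k₁) / u) * m₂ + (m₁ / u) * (m₂ * Real.log (m₂ / k₂))
        - (m₁ * Real.log u / u) * m₂ := by
  rcases eq_or_lt_of_le hm₁ with h | h
  · simp [← h]
  rcases eq_or_lt_of_le hm₂ with h' | h'
  · simp [← h']
  have h0 : m₁ * m₂ / u ≠ 0 := by positivity
  rw [Real.log_div h0 (by positivity), Real.log_div (by positivity) hu.ne',
    Real.log_mul h.ne' h'.ne', Real.log_mul hk₁.ne' hk₂.ne',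
    Real.log_div h.ne' hk₁.ne', Real.log_div h'.ne' hk₂.ne']
  field_simp
  ring

lemma chain_pointwise (m p₁ p₂ u k₁ k₂ : ℝ) (hm : 0 ≤ m) (h1 : m ≤ p₁) (h2 : m ≤ p₂)
    (hu : 0 < u) (hk₁ : 0 < k₁) (hk₂ : 0 < k₂) :
    m * Real.log (m / (p₁ * p₂ / u))
      = m * Real.log (m / (k₁ * k₂)) - Real.log (p₁ / k₁) * m - Real.log (p₂ / k₂) * m
        + Real.log u * m := by
  rcases eq_or_lt_of_le hm with h | h
  · simp [← h]
  have hp₁ : 0 < p₁ := lt_of_lt_of_le h h1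
  have hp₂ : 0 < p₂ := lt_of_lt_of_le h h2
  rw [Real.log_div h.ne' (by positivity), Real.log_div h.ne' (by positivity),
    Real.log_div (by positivity) hu.ne', Real.log_mul hp₁.ne' hp₂.ne',
    Real.log_mul hk₁.ne' hk₂.ne', Real.log_div hp₁.ne' hk₁.ne',
    Real.log_div hp₂.ne' hk₂.ne']
  ring

lemma sum_comp_eq {α γ : Type*} [Fintype α] [Fintype γ] [DecidableEq γ]
    (f : γ → ℝ) (π : α → γ) (g : α → ℝ) :
    ∑ a, f (π a) * g a = ∑ b, f b * (∑ a, if π a = b then g a else 0) := by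
  simp only [Finset.mul_sum, mul_ite, mul_zero]
  rw [Finset.sum_comm]
  refine Finset.sum_congr rfl fun a _ => ?_
  simp

lemma integrate_snd {α β γ : Type*} [Fintype α] [Fintype β] [DecidableEq γ]
    (πa : α → γ) (πb : β → γ) (A : α → ℝ) (B : β → ℝ) (m : γ → ℝ)
    (hB : ∀ r, ∑ b, (if πb b = r then B b else 0) = m r) :
    ∑ a, ∑ b, (if πa a = πb b then A a * B b else 0) = ∑ a, A a * m (πa a) := by
  refine Finset.sum_congr rfl fun a _ => ?_
  rw [← hB (πa a), Finset.mul_sum]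
  refine Finset.sum_congr rfl fun b _ => ?_
  by_cases h : πa a = πb b
  · rw [if_pos h, if_pos h.symm]
  · rw [if_neg h, if_neg (fun e => h e.symm), mul_zero]

lemma integrate_fst {α β γ : Type*} [Fintype α] [Fintype β] [DecidableEq γ]
    (πa : α → γ) (πb : β → γ) (A : α → ℝ) (B : β → ℝ) (m : γ → ℝ)
    (hA : ∀ r, ∑ a, (if πa a = r then A a else 0) = m r) :
    ∑ a, ∑ b, (if πa a = πb b then A a * B b else 0) = ∑ b, m (πb b) * B b := by
  rw [Finset.sum_comm]
  refine Finset.sum_congr rfl fun b _ => ?_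
  rw [← hA (πb b), Finset.sum_mul]
  refine Finset.sum_congr rfl fun a _ => ?_
  by_cases h : πa a = πb b
  · rw [if_pos h, if_pos h]
  · rw [if_neg h, if_neg h, zero_mul]


end TreeCouplingAux

set_option maxHeartbeats 1600000 in
open TreeCouplingAux in


/-- Tree-structured optimal coupling decomposition at a cut vertex:
the optimal coupling for a kernel factorizing over two vertex subsets
`V₁, V₂` intersecting in a single vertex `σ₀` is the glued product of the
two subtree optimal couplings. -/
theorem tree_optimal_coupling_decomposition
    (s : ℕ) (n : Fin s → ℕ)
    (μ : (σ : Fin s) → Fin (n σ) → ℝ)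
    (hμpos : ∀ σ r, 0 < μ σ r) (hμ1 : ∀ σ, ∑ r, μ σ r = 1)
    (V₁ V₂ : Finset (Fin s)) (σ₀ : Fin s)
    (hcover : V₁ ∪ V₂ = Finset.univ) (hcut : V₁ ∩ V₂ = {σ₀})
    (K₁ : ((τ : V₁) → Fin (n τ)) → ℝ) (K₂ : ((τ : V₂) → Fin (n τ)) → ℝ)
    (hK₁ : ∀ j, 0 < K₁ j) (hK₂ : ∀ j, 0 < K₂ j)
    (M : ((σ : Fin s) → Fin (n σ)) → ℝ)
    (M₁ : ((τ : V₁) → Fin (n τ)) → ℝ)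
    (M₂ : ((τ : V₂) → Fin (n τ)) → ℝ)
    -- M is the optimal coupling for the full kernel K = K₁ ⊗ K₂:
    (hMmem : (∀ i, 0 ≤ M i) ∧ ∀ (σ : Fin s) (r : Fin (n σ)),
      ∑ i : (τ : Fin s) → Fin (n τ), (if i σ = r then M i else 0) = μ σ r)
    (hMopt : ∀ N : ((σ : Fin s) → Fin (n σ)) → ℝ,
      ((∀ i, 0 ≤ N i) ∧ ∀ (σ : Fin s) (r : Fin (n σ)),
        ∑ i : (τ : Fin s) → Fin (n τ), (if i σ = r then N i else 0) = μ σ r) →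
      ∑ i, M i * Real.log (M i / (K₁ (fun τ => i τ.1) * K₂ (fun τ => i τ.1)))
        ≤ ∑ i, N i * Real.log (N i / (K₁ (fun τ => i τ.1) * K₂ (fun τ => i τ.1))))
    -- M₁ is the optimal coupling for the first subtree:
    (hM₁mem : (∀ j, 0 ≤ M₁ j) ∧ ∀ (τ : V₁) (r : Fin (n τ)),
      ∑ j : (υ : V₁) → Fin (n υ), (if j τ = r then M₁ j else 0) = μ τ r)
    (hM₁opt : ∀ N : ((τ : V₁) → Fin (n τ)) → ℝ,
      ((∀ j, 0 ≤ N j) ∧ ∀ (τ : V₁) (r : Fin (n τ)),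
        ∑ j : (υ : V₁) → Fin (n υ), (if j τ = r then N j else 0) = μ τ r) →
      ∑ j, M₁ j * Real.log (M₁ j / K₁ j) ≤ ∑ j, N j * Real.log (N j / K₁ j))
    -- M₂ is the optimal coupling for the second subtree:
    (hM₂mem : (∀ j, 0 ≤ M₂ j) ∧ ∀ (τ : V₂) (r : Fin (n τ)),
      ∑ j : (υ : V₂) → Fin (n υ), (if j τ = r then M₂ j else 0) = μ τ r)
    (hM₂opt : ∀ N : ((τ : V₂) → Fin (n τ)) → ℝ,
      ((∀ j, 0 ≤ N j) ∧ ∀ (τ : V₂) (r : Fin (n τ)),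
        ∑ j : (υ : V₂) → Fin (n υ), (if j τ = r then N j else 0) = μ τ r) →
      ∑ j, M₂ j * Real.log (M₂ j / K₂ j) ≤ ∑ j, N j * Real.log (N j / K₂ j)) :
    ∀ i : (σ : Fin s) → Fin (n σ),
      M i = M₁ (fun τ => i τ.1) * M₂ (fun τ => i τ.1) / μ σ₀ (i σ₀) := by
    classical
  obtain ⟨hMnn, hMmarg⟩ := hMmem
  obtain ⟨hM₁nn, hM₁marg⟩ := hM₁mem
  obtain ⟨hM₂nn, hM₂marg⟩ := hM₂mem
  have h₁ : σ₀ ∈ V₁ := by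
    have h : σ₀ ∈ V₁ ∩ V₂ := by rw [hcut]; exact Finset.mem_singleton_self σ₀
    exact (Finset.mem_inter.mp h).1
  have h₂ : σ₀ ∈ V₂ := by
    have h : σ₀ ∈ V₁ ∩ V₂ := by rw [hcut]; exact Finset.mem_singleton_self σ₀
    exact (Finset.mem_inter.mp h).2
  set σ₁ : {x // x ∈ V₁} := ⟨σ₀, h₁⟩ with hσ₁
  set σ₂ : {x // x ∈ V₂} := ⟨σ₀, h₂⟩ with hσ₂
  set P₁ : ((τ : V₁) → Fin (n τ)) → ℝ :=
    fun j₁ => ∑ j₂ : (τ : V₂) → Fin (n τ),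
      if j₁ σ₁ = j₂ σ₂ then M (glue hcover j₁ j₂) else 0 with hP₁def
  set P₂ : ((τ : V₂) → Fin (n τ)) → ℝ :=
    fun j₂ => ∑ j₁ : (τ : V₁) → Fin (n τ),
      if j₁ σ₁ = j₂ σ₂ then M (glue hcover j₁ j₂) else 0 with hP₂def
  have hP₁nn : ∀ j₁, 0 ≤ P₁ j₁ := by
    intro j₁
    refine Finset.sum_nonneg fun j₂ _ => ?_
    by_cases h : j₁ σ₁ = j₂ σ₂ <;> simp [h, hMnn]
  have hP₂nn : ∀ j₂, 0 ≤ P₂ j₂ := by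
    intro j₂
    refine Finset.sum_nonneg fun j₁ _ => ?_
    by_cases h : j₁ σ₁ = j₂ σ₂ <;> simp [h, hMnn]

  have hμne : ∀ σ r, μ σ r ≠ 0 := fun σ r => (hμpos σ r).ne'
  have hP₁marg : ∀ (τ : V₁) (r : Fin (n τ)),
      ∑ j₁ : (υ : V₁) → Fin (n υ), (if j₁ τ = r then P₁ j₁ else 0) = μ τ r := by
    intro τ r
    have key : (∑ i : (σ : Fin s) → Fin (n σ),
          if i τ.1 = r then M (glue hcover (fun τ' => i τ'.1) (fun τ' => i τ'.1)) else 0)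
        = ∑ j₁ : (υ : V₁) → Fin (n υ), ∑ j₂ : (υ : V₂) → Fin (n υ),
            if j₁ σ₁ = j₂ σ₂ then (if j₁ τ = r then M (glue hcover j₁ j₂) else 0) else 0 :=
      sum_glue hcover hcut h₁ h₂ (fun j₁ j₂ => if j₁ τ = r then M (glue hcover j₁ j₂) else 0)
    have e1 : ∑ j₁ : (υ : V₁) → Fin (n υ), (if j₁ τ = r then P₁ j₁ else 0)
        = ∑ j₁ : (υ : V₁) → Fin (n υ), ∑ j₂ : (υ : V₂) → Fin (n υ),
            if j₁ σ₁ = j₂ σ₂ then (if j₁ τ = r then M (glue hcover j₁ j₂) else 0) else 0 := by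
      refine Finset.sum_congr rfl fun j₁ _ => ?_
      by_cases h : j₁ τ = r
      · simp only [hP₁def, if_pos h]
      · simp [h]
    rw [e1, ← key]
    have e2 : (∑ i : (σ : Fin s) → Fin (n σ),
          if i τ.1 = r then M (glue hcover (fun τ' => i τ'.1) (fun τ' => i τ'.1)) else 0)
        = ∑ i : (σ : Fin s) → Fin (n σ), if i τ.1 = r then M i else 0 :=
      Finset.sum_congr rfl fun i _ => by rw [glue_restrict hcover i]
    rw [e2]
    exact hMmarg τ.1 r
  have hP₂marg : ∀ (τ : V₂) (r : Fin (n τ)),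
      ∑ j₂ : (υ : V₂) → Fin (n υ), (if j₂ τ = r then P₂ j₂ else 0) = μ τ r := by
    intro τ r
    have key : (∑ i : (σ : Fin s) → Fin (n σ),
          if i τ.1 = r then M (glue hcover (fun τ' => i τ'.1) (fun τ' => i τ'.1)) else 0)
        = ∑ j₁ : (υ : V₁) → Fin (n υ), ∑ j₂ : (υ : V₂) → Fin (n υ),
            if j₁ σ₁ = j₂ σ₂ then (if j₂ τ = r then M (glue hcover j₁ j₂) else 0) else 0 :=
      sum_glue hcover hcut h₁ h₂ (fun j₁ j₂ => if j₂ τ = r then M (glue hcover j₁ j₂) else 0)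
    have e1 : ∑ j₂ : (υ : V₂) → Fin (n υ), (if j₂ τ = r then P₂ j₂ else 0)
        = ∑ j₂ : (υ : V₂) → Fin (n υ), ∑ j₁ : (υ : V₁) → Fin (n υ),
            if j₁ σ₁ = j₂ σ₂ then (if j₂ τ = r then M (glue hcover j₁ j₂) else 0) else 0 := by
      refine Finset.sum_congr rfl fun j₂ _ => ?_
      by_cases h : j₂ τ = r
      · simp only [hP₂def, if_pos h]
      · simp [h]
    rw [e1, Finset.sum_comm, ← key]
    have e2 : (∑ i : (σ : Fin s) → Fin (n σ),
          if i τ.1 = r then M (glue hcover (fun τ' => i τ'.1) (fun τ' => i τ'.1)) else 0)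
        = ∑ i : (σ : Fin s) → Fin (n σ), if i τ.1 = r then M i else 0 :=
      Finset.sum_congr rfl fun i _ => by rw [glue_restrict hcover i]
    rw [e2]
    exact hMmarg τ.1 r
  have hP₁ge : ∀ i : (σ : Fin s) → Fin (n σ), M i ≤ P₁ (fun τ => i τ.1) := by
    intro i
    have hterm : (if (fun τ : V₁ => i τ.1) σ₁ = (fun τ : V₂ => i τ.1) σ₂
        then M (glue hcover (fun τ => i τ.1) (fun τ => i τ.1)) else 0) = M i := by
      rw [if_pos rfl, glue_restrict hcover i]
    have hle := Finset.single_le_sum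
      (f := fun j₂ : (τ : V₂) → Fin (n τ) =>
        if (fun τ : V₁ => i τ.1) σ₁ = j₂ σ₂ then M (glue hcover (fun τ => i τ.1) j₂) else 0)
      (fun j₂ _ => by by_cases hc : (fun τ : V₁ => i τ.1) σ₁ = j₂ σ₂ <;> simp [hc, hMnn])
      (Finset.mem_univ (fun τ : V₂ => i τ.1))
    beta_reduce at hle
    rw [hterm] at hle
    simpa only [hP₁def] using hle
  have hP₂ge : ∀ i : (σ : Fin s) → Fin (n σ), M i ≤ P₂ (fun τ => i τ.1) := by
    intro i
    have hterm : (if (fun τ : V₁ => i τ.1) σ₁ = (fun τ : V₂ => i τ.1) σ₂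
        then M (glue hcover (fun τ => i τ.1) (fun τ => i τ.1)) else 0) = M i := by
      rw [if_pos rfl, glue_restrict hcover i]
    have hle := Finset.single_le_sum
      (f := fun j₁ : (τ : V₁) → Fin (n τ) =>
        if j₁ σ₁ = (fun τ : V₂ => i τ.1) σ₂ then M (glue hcover j₁ (fun τ => i τ.1)) else 0)
      (fun j₁ _ => by by_cases hc : j₁ σ₁ = (fun τ : V₂ => i τ.1) σ₂ <;> simp [hc, hMnn])
      (Finset.mem_univ (fun τ : V₁ => i τ.1))
    beta_reduce at hle
    rw [hterm] at hle
    simpa only [hP₂def] using hle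
  have hsum1 : ∀ f : ((τ : V₁) → Fin (n τ)) → ℝ,
      ∑ i : (σ : Fin s) → Fin (n σ), f (fun τ => i τ.1) * M i
        = ∑ j₁ : (υ : V₁) → Fin (n υ), f j₁ * P₁ j₁ := by
    intro f
    have key : (∑ i : (σ : Fin s) → Fin (n σ),
          f (fun τ => i τ.1) * M (glue hcover (fun τ => i τ.1) (fun τ => i τ.1)))
        = ∑ j₁ : (υ : V₁) → Fin (n υ), ∑ j₂ : (υ : V₂) → Fin (n υ),
            if j₁ σ₁ = j₂ σ₂ then f j₁ * M (glue hcover j₁ j₂) else 0 :=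
      sum_glue hcover hcut h₁ h₂ (fun j₁ j₂ => f j₁ * M (glue hcover j₁ j₂))
    have e0 : (∑ i : (σ : Fin s) → Fin (n σ), f (fun τ => i τ.1) * M i)
        = ∑ i : (σ : Fin s) → Fin (n σ),
            f (fun τ => i τ.1) * M (glue hcover (fun τ => i τ.1) (fun τ => i τ.1)) :=
      Finset.sum_congr rfl fun i _ => by rw [glue_restrict hcover i]
    rw [e0, key]
    refine Finset.sum_congr rfl fun j₁ _ => ?_
    simp only [hP₁def, Finset.mul_sum]
    exact Finset.sum_congr rfl fun j₂ _ => by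
      by_cases hc : j₁ σ₁ = j₂ σ₂ <;> simp [hc]
  have hsum2 : ∀ f : ((τ : V₂) → Fin (n τ)) → ℝ,
      ∑ i : (σ : Fin s) → Fin (n σ), f (fun τ => i τ.1) * M i
        = ∑ j₂ : (υ : V₂) → Fin (n υ), f j₂ * P₂ j₂ := by
    intro f
    have key : (∑ i : (σ : Fin s) → Fin (n σ),
          f (fun τ => i τ.1) * M (glue hcover (fun τ => i τ.1) (fun τ => i τ.1)))
        = ∑ j₁ : (υ : V₁) → Fin (n υ), ∑ j₂ : (υ : V₂) → Fin (n υ),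
            if j₁ σ₁ = j₂ σ₂ then f j₂ * M (glue hcover j₁ j₂) else 0 :=
      sum_glue hcover hcut h₁ h₂ (fun j₁ j₂ => f j₂ * M (glue hcover j₁ j₂))
    have e0 : (∑ i : (σ : Fin s) → Fin (n σ), f (fun τ => i τ.1) * M i)
        = ∑ i : (σ : Fin s) → Fin (n σ),
            f (fun τ => i τ.1) * M (glue hcover (fun τ => i τ.1) (fun τ => i τ.1)) :=
      Finset.sum_congr rfl fun i _ => by rw [glue_restrict hcover i]
    rw [e0, key, Finset.sum_comm]
    refine Finset.sum_congr rfl fun j₂ _ => ?_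
    simp only [hP₂def, Finset.mul_sum]
    exact Finset.sum_congr rfl fun j₁ _ => by
      by_cases hc : j₁ σ₁ = j₂ σ₂ <;> simp [hc]
  have hdiv : ∀ A : ((τ : V₁) → Fin (n τ)) → ℝ,
      (∀ r, ∑ j₁ : (υ : V₁) → Fin (n υ), (if j₁ σ₁ = r then A j₁ else 0) = μ σ₀ r) →
      ∀ r, ∑ j₁ : (υ : V₁) → Fin (n υ),
        (if j₁ σ₁ = r then A j₁ / μ σ₀ (j₁ σ₁) else 0) = 1 := by
    intro A hA r
    have e : ∀ j₁ : (υ : V₁) → Fin (n υ), (if j₁ σ₁ = r then A j₁ / μ σ₀ (j₁ σ₁) else 0)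
        = (if j₁ σ₁ = r then A j₁ else 0) / μ σ₀ r := by
      intro j₁; by_cases h : j₁ σ₁ = r
      · rw [if_pos h, if_pos h, h]
      · rw [if_neg h, if_neg h, zero_div]
    rw [Finset.sum_congr rfl (fun j₁ _ => e j₁), ← Finset.sum_div, hA r,
      div_self (hμne σ₀ r)]
  have hglueMarg : ∀ (A : ((τ : V₁) → Fin (n τ)) → ℝ) (B : ((τ : V₂) → Fin (n τ)) → ℝ),
      (∀ (τ : V₁) (r : Fin (n τ)),
        ∑ j₁ : (υ : V₁) → Fin (n υ), (if j₁ τ = r then A j₁ else 0) = μ τ r) →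
      (∀ (τ : V₂) (r : Fin (n τ)),
        ∑ j₂ : (υ : V₂) → Fin (n υ), (if j₂ τ = r then B j₂ else 0) = μ τ r) →
      ∀ (σ : Fin s) (r : Fin (n σ)),
        ∑ i : (τ : Fin s) → Fin (n τ),
          (if i σ = r then A (fun τ => i τ.1) * B (fun τ => i τ.1) / μ σ₀ (i σ₀) else 0)
          = μ σ r := by
    intro A B hA hB σ r
    by_cases hσ : σ ∈ V₁
    · have key : (∑ i : (τ : Fin s) → Fin (n τ),
            if i σ = r then A (fun τ => i τ.1) * B (fun τ => i τ.1) / μ σ₀ (i σ₀) else 0)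
          = ∑ j₁ : (υ : V₁) → Fin (n υ), ∑ j₂ : (υ : V₂) → Fin (n υ),
              if j₁ σ₁ = j₂ σ₂ then
                (if j₁ ⟨σ, hσ⟩ = r then A j₁ * B j₂ / μ σ₀ (j₁ σ₁) else 0) else 0 :=
        sum_glue hcover hcut h₁ h₂
          (fun j₁ j₂ => if j₁ ⟨σ, hσ⟩ = r then A j₁ * B j₂ / μ σ₀ (j₁ σ₁) else 0)
      rw [key]
      have e : ∀ (j₁ : (υ : V₁) → Fin (n υ)) (j₂ : (υ : V₂) → Fin (n υ)),
          (if j₁ σ₁ = j₂ σ₂ then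
            (if j₁ ⟨σ, hσ⟩ = r then A j₁ * B j₂ / μ σ₀ (j₁ σ₁) else 0) else 0)
          = (if j₁ σ₁ = j₂ σ₂ then
              (if j₁ ⟨σ, hσ⟩ = r then A j₁ / μ σ₀ (j₁ σ₁) else 0) * B j₂ else 0) := by
        intro j₁ j₂
        by_cases hc : j₁ σ₁ = j₂ σ₂ <;> by_cases hp : j₁ ⟨σ, hσ⟩ = r <;>
          simp [hc, hp] <;> ring
      rw [Finset.sum_congr rfl fun j₁ _ => Finset.sum_congr rfl fun j₂ _ => e j₁ j₂]
      rw [integrate_snd (fun j₁ : (υ : V₁) → Fin (n υ) => j₁ σ₁)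
        (fun j₂ : (υ : V₂) → Fin (n υ) => j₂ σ₂) _ B (μ σ₀) (fun r' => hB σ₂ r')]
      have e2 : ∀ j₁ : (υ : V₁) → Fin (n υ),
          (if j₁ ⟨σ, hσ⟩ = r then A j₁ / μ σ₀ (j₁ σ₁) else 0) * μ σ₀ (j₁ σ₁)
          = (if j₁ ⟨σ, hσ⟩ = r then A j₁ else 0) := by
        intro j₁; by_cases hp : j₁ ⟨σ, hσ⟩ = r
        · rw [if_pos hp, if_pos hp, div_mul_cancel₀ _ (hμne σ₀ (j₁ σ₁))]
        · rw [if_neg hp, if_neg hp, zero_mul]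
      rw [Finset.sum_congr rfl fun j₁ _ => e2 j₁]
      exact hA ⟨σ, hσ⟩ r
    · have hσ' : σ ∈ V₂ := by
        have hmem : σ ∈ V₁ ∪ V₂ := hcover ▸ Finset.mem_univ σ
        exact (Finset.mem_union.mp hmem).resolve_left hσ
      have key : (∑ i : (τ : Fin s) → Fin (n τ),
            if i σ = r then A (fun τ => i τ.1) * B (fun τ => i τ.1) / μ σ₀ (i σ₀) else 0)
          = ∑ j₁ : (υ : V₁) → Fin (n υ), ∑ j₂ : (υ : V₂) → Fin (n υ),
              if j₁ σ₁ = j₂ σ₂ then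
                (if j₂ ⟨σ, hσ'⟩ = r then A j₁ * B j₂ / μ σ₀ (j₁ σ₁) else 0) else 0 :=
        sum_glue hcover hcut h₁ h₂
          (fun j₁ j₂ => if j₂ ⟨σ, hσ'⟩ = r then A j₁ * B j₂ / μ σ₀ (j₁ σ₁) else 0)
      rw [key]
      have e : ∀ (j₁ : (υ : V₁) → Fin (n υ)) (j₂ : (υ : V₂) → Fin (n υ)),
          (if j₁ σ₁ = j₂ σ₂ then
            (if j₂ ⟨σ, hσ'⟩ = r then A j₁ * B j₂ / μ σ₀ (j₁ σ₁) else 0) else 0)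
          = (if j₁ σ₁ = j₂ σ₂ then
              (A j₁ / μ σ₀ (j₁ σ₁)) * (if j₂ ⟨σ, hσ'⟩ = r then B j₂ else 0) else 0) := by
        intro j₁ j₂
        by_cases hc : j₁ σ₁ = j₂ σ₂ <;> by_cases hp : j₂ ⟨σ, hσ'⟩ = r <;>
          simp [hc, hp] <;> ring
      rw [Finset.sum_congr rfl fun j₁ _ => Finset.sum_congr rfl fun j₂ _ => e j₁ j₂]
      rw [integrate_fst (fun j₁ : (υ : V₁) → Fin (n υ) => j₁ σ₁)
        (fun j₂ : (υ : V₂) → Fin (n υ) => j₂ σ₂) _ _ (fun _ => (1:ℝ))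
        (hdiv A (fun r' => hA σ₁ r'))]
      simp only [one_mul]
      exact hB ⟨σ, hσ'⟩ r
  have hM₁proj : ∀ f : Fin (n σ₀) → ℝ,
      ∑ j₁ : (υ : V₁) → Fin (n υ), f (j₁ σ₁) * M₁ j₁ = ∑ r, f r * μ σ₀ r := by
    intro f
    rw [sum_comp_eq f (fun j₁ : (υ : V₁) → Fin (n υ) => j₁ σ₁) M₁]
    exact Finset.sum_congr rfl fun r _ => by rw [hM₁marg σ₁ r]
  have hMproj : ∀ f : Fin (n σ₀) → ℝ,
      ∑ i : (σ : Fin s) → Fin (n σ), f (i σ₀) * M i = ∑ r, f r * μ σ₀ r := by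
    intro f
    rw [sum_comp_eq f (fun i : (σ : Fin s) → Fin (n σ) => i σ₀) M]
    exact Finset.sum_congr rfl fun r _ => by rw [hMmarg σ₀ r]
  have htotal : ∀ g : ((σ : Fin s) → Fin (n σ)) → ℝ,
      (∀ r, ∑ i : (τ : Fin s) → Fin (n τ), (if i σ₀ = r then g i else 0) = μ σ₀ r) →
      ∑ i, g i = 1 := by
    intro g hg
    have e := sum_comp_eq (fun _ => (1:ℝ)) (fun i : (σ : Fin s) → Fin (n σ) => i σ₀) g
    simp only [one_mul] at e
    rw [e, Finset.sum_congr rfl fun r _ => hg r]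
    exact hμ1 σ₀
  -- value of the KL divergence of the glued product of M₁ and M₂:
  have hNval : ∑ i : (σ : Fin s) → Fin (n σ),
        (M₁ (fun τ => i τ.1) * M₂ (fun τ => i τ.1) / μ σ₀ (i σ₀)) *
          Real.log ((M₁ (fun τ => i τ.1) * M₂ (fun τ => i τ.1) / μ σ₀ (i σ₀)) /
            (K₁ (fun τ => i τ.1) * K₂ (fun τ => i τ.1)))
      = (∑ j₁, M₁ j₁ * Real.log (M₁ j₁ / K₁ j₁))
        + (∑ j₂, M₂ j₂ * Real.log (M₂ j₂ / K₂ j₂))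
        - ∑ r, Real.log (μ σ₀ r) * μ σ₀ r := by
    have key : (∑ i : (σ : Fin s) → Fin (n σ),
          (M₁ (fun τ => i τ.1) * M₂ (fun τ => i τ.1) / μ σ₀ (i σ₀)) *
            Real.log ((M₁ (fun τ => i τ.1) * M₂ (fun τ => i τ.1) / μ σ₀ (i σ₀)) /
              (K₁ (fun τ => i τ.1) * K₂ (fun τ => i τ.1))))
        = ∑ j₁ : (υ : V₁) → Fin (n υ), ∑ j₂ : (υ : V₂) → Fin (n υ),
            if j₁ σ₁ = j₂ σ₂ then
              (M₁ j₁ * M₂ j₂ / μ σ₀ (j₁ σ₁)) *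
                Real.log ((M₁ j₁ * M₂ j₂ / μ σ₀ (j₁ σ₁)) / (K₁ j₁ * K₂ j₂)) else 0 :=
      sum_glue hcover hcut h₁ h₂
        (fun j₁ j₂ => (M₁ j₁ * M₂ j₂ / μ σ₀ (j₁ σ₁)) *
          Real.log ((M₁ j₁ * M₂ j₂ / μ σ₀ (j₁ σ₁)) / (K₁ j₁ * K₂ j₂)))
    rw [key]
    have e : ∀ (j₁ : (υ : V₁) → Fin (n υ)) (j₂ : (υ : V₂) → Fin (n υ)),
        (if j₁ σ₁ = j₂ σ₂ then
          (M₁ j₁ * M₂ j₂ / μ σ₀ (j₁ σ₁)) *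
            Real.log ((M₁ j₁ * M₂ j₂ / μ σ₀ (j₁ σ₁)) / (K₁ j₁ * K₂ j₂)) else 0)
        = (if j₁ σ₁ = j₂ σ₂ then
            (M₁ j₁ * Real.log (M₁ j₁ / K₁ j₁) / μ σ₀ (j₁ σ₁)) * M₂ j₂ else 0)
          + (if j₁ σ₁ = j₂ σ₂ then
              (M₁ j₁ / μ σ₀ (j₁ σ₁)) * (M₂ j₂ * Real.log (M₂ j₂ / K₂ j₂)) else 0)
          - (if j₁ σ₁ = j₂ σ₂ then
              (M₁ j₁ * Real.log (μ σ₀ (j₁ σ₁)) / μ σ₀ (j₁ σ₁)) * M₂ j₂ else 0) := by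
      intro j₁ j₂
      by_cases hc : j₁ σ₁ = j₂ σ₂
      · simp only [if_pos hc]
        exact kl_split (M₁ j₁) (M₂ j₂) (μ σ₀ (j₁ σ₁)) (K₁ j₁) (K₂ j₂)
          (hM₁nn j₁) (hM₂nn j₂) (hμpos σ₀ (j₁ σ₁)) (hK₁ j₁) (hK₂ j₂)
      · simp [hc]
    rw [Finset.sum_congr rfl fun j₁ _ => Finset.sum_congr rfl fun j₂ _ => e j₁ j₂]
    simp only [Finset.sum_add_distrib, Finset.sum_sub_distrib]
    rw [integrate_snd (fun j₁ : (υ : V₁) → Fin (n υ) => j₁ σ₁)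
      (fun j₂ : (υ : V₂) → Fin (n υ) => j₂ σ₂)
      (fun j₁ => M₁ j₁ * Real.log (M₁ j₁ / K₁ j₁) / μ σ₀ (j₁ σ₁)) M₂ (μ σ₀)
      (fun r' => hM₂marg σ₂ r')]
    rw [integrate_fst (fun j₁ : (υ : V₁) → Fin (n υ) => j₁ σ₁)
      (fun j₂ : (υ : V₂) → Fin (n υ) => j₂ σ₂)
      (fun j₁ => M₁ j₁ / μ σ₀ (j₁ σ₁)) (fun j₂ => M₂ j₂ * Real.log (M₂ j₂ / K₂ j₂))
      (fun _ => (1:ℝ)) (hdiv M₁ (fun r' => hM₁marg σ₁ r'))]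
    rw [integrate_snd (fun j₁ : (υ : V₁) → Fin (n υ) => j₁ σ₁)
      (fun j₂ : (υ : V₂) → Fin (n υ) => j₂ σ₂)
      (fun j₁ => M₁ j₁ * Real.log (μ σ₀ (j₁ σ₁)) / μ σ₀ (j₁ σ₁)) M₂ (μ σ₀)
      (fun r' => hM₂marg σ₂ r')]
    have e1 : ∑ j₁ : (υ : V₁) → Fin (n υ),
        M₁ j₁ * Real.log (M₁ j₁ / K₁ j₁) / μ σ₀ (j₁ σ₁) * μ σ₀ (j₁ σ₁)
        = ∑ j₁, M₁ j₁ * Real.log (M₁ j₁ / K₁ j₁) :=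
      Finset.sum_congr rfl fun j₁ _ => div_mul_cancel₀ _ (hμne σ₀ (j₁ σ₁))
    have e2 : ∑ j₁ : (υ : V₁) → Fin (n υ),
        M₁ j₁ * Real.log (μ σ₀ (j₁ σ₁)) / μ σ₀ (j₁ σ₁) * μ σ₀ (j₁ σ₁)
        = ∑ r, Real.log (μ σ₀ r) * μ σ₀ r := by
      rw [Finset.sum_congr rfl fun j₁ (_ : j₁ ∈ Finset.univ) =>
        (div_mul_cancel₀ (M₁ j₁ * Real.log (μ σ₀ (j₁ σ₁))) (hμne σ₀ (j₁ σ₁)))]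
      rw [Finset.sum_congr rfl fun j₁ (_ : j₁ ∈ Finset.univ) =>
        mul_comm (M₁ j₁) (Real.log (μ σ₀ (j₁ σ₁)))]
      exact hM₁proj (fun r => Real.log (μ σ₀ r))
    rw [e1, e2]
    simp only [one_mul]
  -- chain rule for the KL divergence of M:
  have hchain : ∑ i : (σ : Fin s) → Fin (n σ),
        M i * Real.log (M i /
          (P₁ (fun τ => i τ.1) * P₂ (fun τ => i τ.1) / μ σ₀ (i σ₀)))
      = (∑ i : (σ : Fin s) → Fin (n σ),
          M i * Real.log (M i / (K₁ (fun τ => i τ.1) * K₂ (fun τ => i τ.1))))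
        - (∑ j₁, P₁ j₁ * Real.log (P₁ j₁ / K₁ j₁))
        - (∑ j₂, P₂ j₂ * Real.log (P₂ j₂ / K₂ j₂))
        + ∑ r, Real.log (μ σ₀ r) * μ σ₀ r := by
    have e : ∀ i : (σ : Fin s) → Fin (n σ),
        M i * Real.log (M i /
          (P₁ (fun τ => i τ.1) * P₂ (fun τ => i τ.1) / μ σ₀ (i σ₀)))
        = M i * Real.log (M i / (K₁ (fun τ => i τ.1) * K₂ (fun τ => i τ.1)))
          - Real.log (P₁ (fun τ => i τ.1) / K₁ (fun τ => i τ.1)) * M i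
          - Real.log (P₂ (fun τ => i τ.1) / K₂ (fun τ => i τ.1)) * M i
          + Real.log (μ σ₀ (i σ₀)) * M i := fun i =>
      chain_pointwise (M i) (P₁ (fun τ => i τ.1)) (P₂ (fun τ => i τ.1))
        (μ σ₀ (i σ₀)) (K₁ (fun τ => i τ.1)) (K₂ (fun τ => i τ.1))
        (hMnn i) (hP₁ge i) (hP₂ge i) (hμpos σ₀ (i σ₀)) (hK₁ _) (hK₂ _)
    rw [Finset.sum_congr rfl fun i _ => e i]
    simp only [Finset.sum_add_distrib, Finset.sum_sub_distrib]
    rw [hsum1 (fun j₁ => Real.log (P₁ j₁ / K₁ j₁)),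
      hsum2 (fun j₂ => Real.log (P₂ j₂ / K₂ j₂)),
      hMproj (fun r => Real.log (μ σ₀ r))]
    rw [Finset.sum_congr rfl fun j₁ (_ : j₁ ∈ Finset.univ) =>
      mul_comm (Real.log (P₁ j₁ / K₁ j₁)) (P₁ j₁)]
    rw [Finset.sum_congr rfl fun j₂ (_ : j₂ ∈ Finset.univ) =>
      mul_comm (Real.log (P₂ j₂ / K₂ j₂)) (P₂ j₂)]
  have hMsum : ∑ i : (σ : Fin s) → Fin (n σ), M i = 1 := htotal M (hMmarg σ₀)
  have hQsum : ∑ i : (σ : Fin s) → Fin (n σ),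
      P₁ (fun τ => i τ.1) * P₂ (fun τ => i τ.1) / μ σ₀ (i σ₀) = 1 :=
    htotal _ (hglueMarg P₁ P₂ hP₁marg hP₂marg σ₀)
  have hQnn : ∀ i : (σ : Fin s) → Fin (n σ),
      0 ≤ P₁ (fun τ => i τ.1) * P₂ (fun τ => i τ.1) / μ σ₀ (i σ₀) := fun i =>
    div_nonneg (mul_nonneg (hP₁nn (fun τ => i τ.1)) (hP₂nn (fun τ => i τ.1))) (hμpos σ₀ (i σ₀)).le
  have hQpos : ∀ i : (σ : Fin s) → Fin (n σ), 0 < M i →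
      0 < P₁ (fun τ => i τ.1) * P₂ (fun τ => i τ.1) / μ σ₀ (i σ₀) := fun i hi =>
    div_pos (mul_pos (lt_of_lt_of_le hi (hP₁ge i)) (lt_of_lt_of_le hi (hP₂ge i)))
      (hμpos σ₀ (i σ₀))
  -- Gibbs: the relative-entropy term is nonnegative
  have hGibbs : ∀ i : (σ : Fin s) → Fin (n σ),
      M i - P₁ (fun τ => i τ.1) * P₂ (fun τ => i τ.1) / μ σ₀ (i σ₀)
        ≤ M i * Real.log (M i /
          (P₁ (fun τ => i τ.1) * P₂ (fun τ => i τ.1) / μ σ₀ (i σ₀))) := fun i =>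
    mul_log_ge _ _ (hMnn i) (hQnn i) (hQpos i)
  have hDnn : 0 ≤ ∑ i : (σ : Fin s) → Fin (n σ),
      M i * Real.log (M i /
        (P₁ (fun τ => i τ.1) * P₂ (fun τ => i τ.1) / μ σ₀ (i σ₀))) := by
    have e0 : (0:ℝ) = ∑ i : (σ : Fin s) → Fin (n σ),
        (M i - P₁ (fun τ => i τ.1) * P₂ (fun τ => i τ.1) / μ σ₀ (i σ₀)) := by
      rw [Finset.sum_sub_distrib, hMsum, hQsum]; ring
    rw [e0]
    exact Finset.sum_le_sum fun i _ => hGibbs i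
  -- optimality comparisons:
  have hNopt := hMopt (fun i => M₁ (fun τ => i τ.1) * M₂ (fun τ => i τ.1) / μ σ₀ (i σ₀))
    ⟨fun i => div_nonneg (mul_nonneg (hM₁nn (fun τ => i τ.1)) (hM₂nn (fun τ => i τ.1))) (hμpos σ₀ (i σ₀)).le,
      hglueMarg M₁ M₂ hM₁marg hM₂marg⟩
  beta_reduce at hNopt
  rw [hNval] at hNopt
  have hP₁opt := hM₁opt P₁ ⟨hP₁nn, hP₁marg⟩
  have hP₂opt := hM₂opt P₂ ⟨hP₂nn, hP₂marg⟩
  -- equalities forced: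
  have hDzero : ∑ i : (σ : Fin s) → Fin (n σ),
      M i * Real.log (M i /
        (P₁ (fun τ => i τ.1) * P₂ (fun τ => i τ.1) / μ σ₀ (i σ₀))) = 0 := by
    linarith
  have hKL₁eq : ∑ j₁, P₁ j₁ * Real.log (P₁ j₁ / K₁ j₁)
      = ∑ j₁, M₁ j₁ * Real.log (M₁ j₁ / K₁ j₁) := by linarith
  have hKL₂eq : ∑ j₂, P₂ j₂ * Real.log (P₂ j₂ / K₂ j₂)
      = ∑ j₂, M₂ j₂ * Real.log (M₂ j₂ / K₂ j₂) := by linarith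
  -- pointwise equality M = P₁ ⊗ P₂ / μ:
  have hsum0 : ∑ i : (σ : Fin s) → Fin (n σ),
      (M i * Real.log (M i /
          (P₁ (fun τ => i τ.1) * P₂ (fun τ => i τ.1) / μ σ₀ (i σ₀)))
        - (M i - P₁ (fun τ => i τ.1) * P₂ (fun τ => i τ.1) / μ σ₀ (i σ₀))) = 0 := by
    rw [Finset.sum_sub_distrib, Finset.sum_sub_distrib, hDzero, hMsum, hQsum]
    ring
  have hterm0 := (Finset.sum_eq_zero_iff_of_nonneg
    (fun i _ => by linarith [hGibbs i])).mp hsum0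
  have hMQ : ∀ i : (σ : Fin s) → Fin (n σ),
      M i = P₁ (fun τ => i τ.1) * P₂ (fun τ => i τ.1) / μ σ₀ (i σ₀) := by
    intro i
    refine mul_log_eq _ _ (hMnn i) (hQnn i) (hQpos i) ?_
    have := hterm0 i (Finset.mem_univ i)
    linarith
  -- uniqueness of the subtree minimizers, by strict convexity:
  have hPM₁ : ∀ j₁, P₁ j₁ = M₁ j₁ := by
    by_contra hne
    push_neg at hne
    obtain ⟨j₀, hj₀⟩ := hne
    have hRnn : ∀ j₁, 0 ≤ (P₁ j₁ + M₁ j₁) / 2 := fun j₁ => by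
      have := hP₁nn j₁; have := hM₁nn j₁; positivity
    have hRmarg : ∀ (τ : V₁) (r : Fin (n τ)),
        ∑ j₁ : (υ : V₁) → Fin (n υ),
          (if j₁ τ = r then (P₁ j₁ + M₁ j₁) / 2 else 0) = μ τ r := by
      intro τ r
      have e : ∀ j₁ : (υ : V₁) → Fin (n υ),
          (if j₁ τ = r then (P₁ j₁ + M₁ j₁) / 2 else 0)
          = ((if j₁ τ = r then P₁ j₁ else 0) + (if j₁ τ = r then M₁ j₁ else 0)) / 2 := by
        intro j₁; by_cases h : j₁ τ = r <;> simp [h]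
      rw [Finset.sum_congr rfl fun j₁ _ => e j₁, ← Finset.sum_div,
        Finset.sum_add_distrib, hP₁marg τ r, hM₁marg τ r]
      ring
    have hopt := hM₁opt (fun j₁ => (P₁ j₁ + M₁ j₁) / 2) ⟨hRnn, hRmarg⟩
    beta_reduce at hopt
    have hlt : ∑ j₁, ((P₁ j₁ + M₁ j₁) / 2) *
        Real.log (((P₁ j₁ + M₁ j₁) / 2) / K₁ j₁)
        < ∑ j₁, M₁ j₁ * Real.log (M₁ j₁ / K₁ j₁) := by
      have hstep : ∑ j₁, ((P₁ j₁ + M₁ j₁) / 2) *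
          Real.log (((P₁ j₁ + M₁ j₁) / 2) / K₁ j₁)
          < ∑ j₁, (P₁ j₁ * Real.log (P₁ j₁ / K₁ j₁)
              + M₁ j₁ * Real.log (M₁ j₁ / K₁ j₁)) / 2 :=
        Finset.sum_lt_sum
          (fun j₁ _ => midpoint_le (K₁ j₁) (P₁ j₁) (M₁ j₁) (hK₁ j₁) (hP₁nn j₁) (hM₁nn j₁))
          ⟨j₀, Finset.mem_univ j₀,
            midpoint_lt (K₁ j₀) (P₁ j₀) (M₁ j₀) (hK₁ j₀) (hP₁nn j₀) (hM₁nn j₀) hj₀⟩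
      have hsplit : ∑ j₁, (P₁ j₁ * Real.log (P₁ j₁ / K₁ j₁)
          + M₁ j₁ * Real.log (M₁ j₁ / K₁ j₁)) / 2
          = ((∑ j₁, P₁ j₁ * Real.log (P₁ j₁ / K₁ j₁))
            + ∑ j₁, M₁ j₁ * Real.log (M₁ j₁ / K₁ j₁)) / 2 := by
        rw [← Finset.sum_div, Finset.sum_add_distrib]
      rw [hsplit, hKL₁eq] at hstep
      linarith
    linarith
  have hPM₂ : ∀ j₂, P₂ j₂ = M₂ j₂ := by
    by_contra hne
    push_neg at hne
    obtain ⟨j₀, hj₀⟩ := hne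
    have hRnn : ∀ j₂, 0 ≤ (P₂ j₂ + M₂ j₂) / 2 := fun j₂ => by
      have := hP₂nn j₂; have := hM₂nn j₂; positivity
    have hRmarg : ∀ (τ : V₂) (r : Fin (n τ)),
        ∑ j₂ : (υ : V₂) → Fin (n υ),
          (if j₂ τ = r then (P₂ j₂ + M₂ j₂) / 2 else 0) = μ τ r := by
      intro τ r
      have e : ∀ j₂ : (υ : V₂) → Fin (n υ),
          (if j₂ τ = r then (P₂ j₂ + M₂ j₂) / 2 else 0)
          = ((if j₂ τ = r then P₂ j₂ else 0) + (if j₂ τ = r then M₂ j₂ else 0)) / 2 := by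
        intro j₂; by_cases h : j₂ τ = r <;> simp [h]
      rw [Finset.sum_congr rfl fun j₂ _ => e j₂, ← Finset.sum_div,
        Finset.sum_add_distrib, hP₂marg τ r, hM₂marg τ r]
      ring
    have hopt := hM₂opt (fun j₂ => (P₂ j₂ + M₂ j₂) / 2) ⟨hRnn, hRmarg⟩
    beta_reduce at hopt
    have hlt : ∑ j₂, ((P₂ j₂ + M₂ j₂) / 2) *
        Real.log (((P₂ j₂ + M₂ j₂) / 2) / K₂ j₂)
        < ∑ j₂, M₂ j₂ * Real.log (M₂ j₂ / K₂ j₂) := by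
      have hstep : ∑ j₂, ((P₂ j₂ + M₂ j₂) / 2) *
          Real.log (((P₂ j₂ + M₂ j₂) / 2) / K₂ j₂)
          < ∑ j₂, (P₂ j₂ * Real.log (P₂ j₂ / K₂ j₂)
              + M₂ j₂ * Real.log (M₂ j₂ / K₂ j₂)) / 2 :=
        Finset.sum_lt_sum
          (fun j₂ _ => midpoint_le (K₂ j₂) (P₂ j₂) (M₂ j₂) (hK₂ j₂) (hP₂nn j₂) (hM₂nn j₂))
          ⟨j₀, Finset.mem_univ j₀,
            midpoint_lt (K₂ j₀) (P₂ j₀) (M₂ j₀) (hK₂ j₀) (hP₂nn j₀) (hM₂nn j₀) hj₀⟩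
      have hsplit : ∑ j₂, (P₂ j₂ * Real.log (P₂ j₂ / K₂ j₂)
          + M₂ j₂ * Real.log (M₂ j₂ / K₂ j₂)) / 2
          = ((∑ j₂, P₂ j₂ * Real.log (P₂ j₂ / K₂ j₂))
            + ∑ j₂, M₂ j₂ * Real.log (M₂ j₂ / K₂ j₂)) / 2 := by
        rw [← Finset.sum_div, Finset.sum_add_distrib]
      rw [hsplit, hKL₂eq] at hstep
      linarith
    linarith
  intro i
  rw [← hPM₁ (fun τ => i τ.1), ← hPM₂ (fun τ => i τ.1)]
  exact hMQ i
end

section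
/- Optimal tree-MSB cost decomposes over edges: for a tree T = (V, E) on vertices {1,...,s} with strictly positive marginals μ_σ and edge-additive Gibbs kernel K, the optimal value satisfies D_KL(M*_T ∥ K) = Σ_{(σ₁,σ₂)∈E} D_KL(M*_{σ₁σ₂} ∥ K_{σ₁σ₂}) + Σ_{σ=1}^{s} (deg(σ) - 1) · H(μ_σ), where M*_{σ₁σ₂} is the optimal bimarginal Schrödinger bridge coupling between μ_{σ₁} and μ_{σ₂} with kernel K_{σ₁σ₂} = exp(-C_{σ₁σ₂}/η), deg(σ) is the degree of vertex σ in T, and H(μ) = -Σ_r μ(r) log μ(r). -/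
open Finset
namespace TreeMSBAux
variable {s : ℕ} {n : Fin s → ℕ}

def dg (E : Finset (Fin s × Fin s)) (v : Fin s) : ℕ :=
  (E.filter fun e => e.1 = v ∨ e.2 = v).card

noncomputable def Wfun (E : Finset (Fin s × Fin s))
    (p : (σ₁ σ₂ : Fin s) → Fin (n σ₁) → Fin (n σ₂) → ℝ)
    (μ : (σ : Fin s) → Fin (n σ) → ℝ) (i : (σ : Fin s) → Fin (n σ)) : ℝ :=
  (∏ e ∈ E, p e.1 e.2 (i e.1) (i e.2)) *
    ∏ v, (μ v (i v)) ^ ((1 : ℤ) - (dg E v : ℤ))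

lemma dg_empty (v : Fin s) : dg (∅ : Finset (Fin s × Fin s)) v = 0 := by
  simp [dg]

lemma dg_insert (e₀ : Fin s × Fin s) (E' : Finset (Fin s × Fin s)) (he₀ : e₀ ∉ E')
    (v : Fin s) :
    dg (insert e₀ E') v = dg E' v + (if e₀.1 = v ∨ e₀.2 = v then 1 else 0) := by
  unfold dg
  rw [Finset.filter_insert]
  split
  · rw [Finset.card_insert_of_notMem fun h => he₀ (Finset.mem_of_mem_filter _ h)]
  · simp

lemma dg_zero (E' : Finset (Fin s × Fin s)) (ℓ : Fin s)
    (h : ∀ e ∈ E', e.1 ≠ ℓ ∧ e.2 ≠ ℓ) : dg E' ℓ = 0 := by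
  unfold dg
  rw [Finset.card_eq_zero, Finset.filter_eq_empty_iff]
  intro e he
  rcases h e he with ⟨h1, h2⟩
  push_neg
  exact ⟨h1, h2⟩

lemma wcov (E' : Finset (Fin s × Fin s))
    (p : (σ₁ σ₂ : Fin s) → Fin (n σ₁) → Fin (n σ₂) → ℝ)
    (μ : (σ : Fin s) → Fin (n σ) → ℝ) (ℓ : Fin s)
    (hE'ℓ : ∀ e ∈ E', e.1 ≠ ℓ ∧ e.2 ≠ ℓ) :
    ∀ i x, Wfun E' p μ (Function.update i ℓ x) * μ ℓ (i ℓ) = Wfun E' p μ i * μ ℓ x := by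
  intro i x
  have hdgℓ : dg E' ℓ = 0 := dg_zero E' ℓ hE'ℓ
  unfold Wfun
  have hedge : ∏ e ∈ E', p e.1 e.2 (Function.update i ℓ x e.1) (Function.update i ℓ x e.2)
      = ∏ e ∈ E', p e.1 e.2 (i e.1) (i e.2) := by
    refine Finset.prod_congr rfl fun e he => ?_
    rw [Function.update_of_ne (hE'ℓ e he).1, Function.update_of_ne (hE'ℓ e he).2]
  have key : ∀ j : (σ : Fin s) → Fin (n σ),
      ∏ v, (μ v (j v)) ^ ((1 : ℤ) - (dg E' v : ℤ))
        = (∏ v ∈ Finset.univ.erase ℓ, (μ v (j v)) ^ ((1 : ℤ) - (dg E' v : ℤ))) * μ ℓ (j ℓ) := by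
    intro j
    rw [← Finset.prod_erase_mul Finset.univ _ (Finset.mem_univ ℓ)]
    congr 1
    rw [hdgℓ]
    norm_num
  have herase : ∏ v ∈ Finset.univ.erase ℓ,
        (μ v (Function.update i ℓ x v)) ^ ((1 : ℤ) - (dg E' v : ℤ))
      = ∏ v ∈ Finset.univ.erase ℓ, (μ v (i v)) ^ ((1 : ℤ) - (dg E' v : ℤ)) := by
    refine Finset.prod_congr rfl fun v hv => ?_
    rw [Function.update_of_ne (Finset.ne_of_mem_erase hv)]
  rw [hedge, key, key, herase, Function.update_self]
  ring

lemma group1 {v : Fin s} (F : ((σ : Fin s) → Fin (n σ)) → ℝ) (h : Fin (n v) → ℝ) :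
    ∑ i, F i * h (i v) = ∑ r, (∑ i, if i v = r then F i else 0) * h r := by
  have key : ∀ i : (σ : Fin s) → Fin (n σ),
      F i * h (i v) = ∑ r, if i v = r then F i * h r else 0 := by
    intro i
    rw [Finset.sum_ite_eq]
    simp
  rw [Finset.sum_congr rfl fun i _ => key i, Finset.sum_comm]
  refine Finset.sum_congr rfl fun r _ => ?_
  rw [Finset.sum_mul]
  exact Finset.sum_congr rfl fun i _ => by split <;> simp

lemma group2 {a b : Fin s} (F : ((σ : Fin s) → Fin (n σ)) → ℝ)
    (f : Fin (n a) → Fin (n b) → ℝ) :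
    ∑ i, F i * f (i a) (i b)
      = ∑ x, ∑ y, (∑ i, if i a = x ∧ i b = y then F i else 0) * f x y := by
  have key : ∀ i : (σ : Fin s) → Fin (n σ),
      F i * f (i a) (i b) = ∑ x, ∑ y, if i a = x ∧ i b = y then F i * f x y else 0 := by
    intro i
    have : ∀ x, (∑ y, if i a = x ∧ i b = y then F i * f x y else 0)
        = if i a = x then F i * f x (i b) else 0 := by
      intro x
      by_cases hx : i a = x
      · simp only [hx, true_and, Finset.sum_ite_eq, Finset.mem_univ, if_true]
      · simp [hx]
    rw [Finset.sum_congr rfl fun x _ => this x, Finset.sum_ite_eq]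
    simp
  rw [Finset.sum_congr rfl fun i _ => key i, Finset.sum_comm]
  refine Finset.sum_congr rfl fun x _ => ?_
  rw [Finset.sum_comm]
  refine Finset.sum_congr rfl fun y _ => ?_
  rw [Finset.sum_mul]
  exact Finset.sum_congr rfl fun i _ => by split <;> simp

lemma iso {μ : (σ : Fin s) → Fin (n σ) → ℝ} (ℓ : Fin s) (hμ1 : ∑ x, μ ℓ x = 1)
    (F : ((σ : Fin s) → Fin (n σ)) → ℝ)
    (hF : ∀ i x, F (Function.update i ℓ x) * μ ℓ (i ℓ) = F i * μ ℓ x)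
    (x : Fin (n ℓ)) :
    ∑ i, (if i ℓ = x then F i else 0) = μ ℓ x * ∑ i, F i := by
  set A : Fin (n ℓ) → ℝ := fun x => ∑ i, (if i ℓ = x then F i else 0) with hA
  have claim : ∀ x x' : Fin (n ℓ), A x' * μ ℓ x = A x * μ ℓ x' := by
    intro x x'
    set σe := Equiv.swap x x' with hσe
    have hgg : ∀ i : (σ : Fin s) → Fin (n σ),
        Function.update (Function.update i ℓ (σe (i ℓ))) ℓ
          (σe ((Function.update i ℓ (σe (i ℓ))) ℓ)) = i := by
      intro i
      rw [Function.update_self, Function.update_idem, Equiv.swap_apply_self,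
        Function.update_eq_self]
    let g : ((σ : Fin s) → Fin (n σ)) ≃ ((σ : Fin s) → Fin (n σ)) :=
      ⟨fun i => Function.update i ℓ (σe (i ℓ)),
       fun i => Function.update i ℓ (σe (i ℓ)), hgg, hgg⟩
    have := Equiv.sum_comp g (fun i => (if i ℓ = x' then F i else 0) * μ ℓ x)
    rw [hA]
    rw [← Finset.sum_mul, ← Finset.sum_mul] at *
    rw [← this]
    rw [Finset.sum_mul, Finset.sum_mul]
    refine Finset.sum_congr rfl fun i _ => ?_
    have hgiℓ : g i ℓ = σe (i ℓ) := Function.update_self ℓ _ i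
    by_cases hc : i ℓ = x
    · have h1 : g i ℓ = x' := by rw [hgiℓ, hc, hσe, Equiv.swap_apply_left]
      rw [if_pos h1, if_pos hc]
      have := hF i x'
      rw [hc] at this
      show F (Function.update i ℓ (σe (i ℓ))) * μ ℓ x = F i * μ ℓ x'
      rw [hgiℓ] at h1
      rw [show σe (i ℓ) = x' from h1]
      exact this
    · have h1 : ¬ (g i ℓ = x') := by
        rw [hgiℓ]
        intro hcon
        apply hc
        have := congrArg σe hcon
        rwa [Equiv.swap_apply_self, hσe, Equiv.swap_apply_right] at this
      rw [if_neg h1, if_neg hc, zero_mul, zero_mul]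
  have total : ∑ x', A x' = ∑ i, F i := by
    rw [hA, Finset.sum_comm]
    refine Finset.sum_congr rfl fun i _ => ?_
    rw [Finset.sum_ite_eq]; simp
  have key := Finset.sum_congr rfl (fun x' (_ : x' ∈ Finset.univ) => claim x x')
  rw [← Finset.sum_mul, ← Finset.mul_sum, total, hμ1, mul_one] at key
  show A x = _
  rw [← key, mul_comm]


section Step
variable {μ : (σ : Fin s) → Fin (n σ) → ℝ} {ℓ u : Fin s}
  {W₁ W₀ : ((σ : Fin s) → Fin (n σ)) → ℝ} {c : Fin (n ℓ) → Fin (n u) → ℝ}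

lemma step3 (hμ1ℓ : ∑ x, μ ℓ x = 1) (hlu : ℓ ≠ u)
    (hW : ∀ i, W₁ i = W₀ i * c (i ℓ) (i u))
    (cov : ∀ i x, W₀ (Function.update i ℓ x) * μ ℓ (i ℓ) = W₀ i * μ ℓ x)
    (hc1 : ∀ y, ∑ x, μ ℓ x * c x y = 1)
    (g : ((σ : Fin s) → Fin (n σ)) → ℝ)
    (ginv : ∀ i x, g (Function.update i ℓ x) = g i) :
    ∑ i, g i * W₁ i = ∑ i, g i * W₀ i := by
  have key : ∀ i : (σ : Fin s) → Fin (n σ),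
      g i * W₁ i = ∑ x, (if i ℓ = x then (g i * W₀ i) * c x (i u) else 0) := by
    intro i
    rw [Finset.sum_ite_eq]
    simp only [Finset.mem_univ, if_true]
    rw [hW i]; ring
  rw [Finset.sum_congr rfl fun i _ => key i, Finset.sum_comm]
  have inner : ∀ x, (∑ i, if i ℓ = x then (g i * W₀ i) * c x (i u) else 0)
      = μ ℓ x * ∑ i, (g i * W₀ i) * c x (i u) := by
    intro x
    refine iso ℓ hμ1ℓ _ (fun i x' => ?_) x
    rw [ginv, Function.update_of_ne (Ne.symm hlu)]
    linear_combination (g i * c x (i u)) * cov i x'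
  rw [Finset.sum_congr rfl fun x _ => inner x]
  have swap : ∀ x, μ ℓ x * ∑ i, (g i * W₀ i) * c x (i u)
      = ∑ i, (g i * W₀ i) * (μ ℓ x * c x (i u)) := by
    intro x
    rw [Finset.mul_sum]
    exact Finset.sum_congr rfl fun i _ => by ring
  rw [Finset.sum_congr rfl fun x _ => swap x, Finset.sum_comm]
  refine Finset.sum_congr rfl fun i _ => ?_
  rw [← Finset.mul_sum, hc1 (i u), mul_one]

lemma step2 (hμ1ℓ : ∑ x, μ ℓ x = 1) (hlu : ℓ ≠ u)
    (hW : ∀ i, W₁ i = W₀ i * c (i ℓ) (i u))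
    (cov : ∀ i x, W₀ (Function.update i ℓ x) * μ ℓ (i ℓ) = W₀ i * μ ℓ x)
    (hmargu : ∀ y, (∑ i, if i u = y then W₀ i else 0) = μ u y)
    (x : Fin (n ℓ)) (y : Fin (n u)) :
    (∑ i, if i ℓ = x ∧ i u = y then W₁ i else 0) = μ ℓ x * (c x y * μ u y) := by
  have key : ∀ i : (σ : Fin s) → Fin (n σ),
      (if i ℓ = x ∧ i u = y then W₁ i else 0)
        = (if i ℓ = x then (if i u = y then W₀ i * c x y else 0) else 0) := by
    intro i
    by_cases h1 : i ℓ = x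
    · by_cases h2 : i u = y
      · rw [if_pos ⟨h1, h2⟩, if_pos h1, if_pos h2, hW i, h1, h2]
      · rw [if_neg (by tauto), if_pos h1, if_neg h2]
    · rw [if_neg (by tauto), if_neg h1]
  rw [Finset.sum_congr rfl fun i _ => key i]
  rw [iso ℓ hμ1ℓ _ (fun i x' => ?_) x]
  · congr 1
    have : ∀ i : (σ : Fin s) → Fin (n σ),
        (if i u = y then W₀ i * c x y else 0) = (if i u = y then W₀ i else 0) * c x y := by
      intro i; split <;> simp
    rw [Finset.sum_congr rfl fun i _ => this i, ← Finset.sum_mul, hmargu y]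
    ring
  · rw [Function.update_of_ne (Ne.symm hlu)]
    by_cases h2 : i u = y
    · rw [if_pos h2, if_pos h2]
      linear_combination (c x y) * cov i x'
    · rw [if_neg h2, if_neg h2, zero_mul, zero_mul]

lemma step1 (hμ1ℓ : ∑ x, μ ℓ x = 1) (hlu : ℓ ≠ u)
    (hW : ∀ i, W₁ i = W₀ i * c (i ℓ) (i u))
    (cov : ∀ i x, W₀ (Function.update i ℓ x) * μ ℓ (i ℓ) = W₀ i * μ ℓ x)
    (hmargu : ∀ y, (∑ i, if i u = y then W₀ i else 0) = μ u y)
    (hc2 : ∀ x, ∑ y, c x y * μ u y = 1)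
    (r : Fin (n ℓ)) :
    (∑ i, if i ℓ = r then W₁ i else 0) = μ ℓ r := by
  have expand : ∀ i : (σ : Fin s) → Fin (n σ),
      (if i ℓ = r then W₁ i else 0) = ∑ y, (if i ℓ = r ∧ i u = y then W₁ i else 0) := by
    intro i
    by_cases h : i ℓ = r
    · simp only [h, true_and]
      rw [Finset.sum_ite_eq]
      simp
    · simp [h]
  rw [Finset.sum_congr rfl fun i _ => expand i, Finset.sum_comm]
  rw [Finset.sum_congr rfl fun y _ => step2 hμ1ℓ hlu hW cov hmargu r y]
  have : ∀ y, μ ℓ r * (c r y * μ u y) = μ ℓ r * (c r y * μ u y) := fun _ => rfl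
  rw [← Finset.mul_sum, hc2 r, mul_one]

end Step

lemma bmul (P : Prop) [Decidable P] (w : ℝ) :
    (if P then w else 0) = (if P then (1:ℝ) else 0) * w := by
  split <;> simp

theorem core (μ : (σ : Fin s) → Fin (n σ) → ℝ) (hμpos : ∀ σ r, 0 < μ σ r)
    (hμ1 : ∀ σ, ∑ r, μ σ r = 1) (E : Finset (Fin s × Fin s)) :
    (∀ e ∈ E, e.1 ≠ e.2) →
    (∀ F ⊆ E, F.Nonempty → ∃ e ∈ F, dg F e.1 = 1 ∨ dg F e.2 = 1) →
    ∀ p : (σ₁ σ₂ : Fin s) → Fin (n σ₁) → Fin (n σ₂) → ℝ,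
    (∀ e ∈ E, ∀ x, ∑ y, p e.1 e.2 x y = μ e.1 x) →
    (∀ e ∈ E, ∀ y, ∑ x, p e.1 e.2 x y = μ e.2 y) →
    (∀ v r, (∑ i, if i v = r then Wfun E p μ i else 0) = μ v r) ∧
    (∀ e ∈ E, ∀ x y,
      (∑ i, if i e.1 = x ∧ i e.2 = y then Wfun E p μ i else 0) = p e.1 e.2 x y) := by
  induction E using Finset.strongInduction with
  | _ E IH =>
  intro hloop hleaf p hrow hcol
  rcases E.eq_empty_or_nonempty with hE | hne
  · subst hE
    constructor
    · intro v r
      have cov := wcov (∅ : Finset (Fin s × Fin s)) p μ v (by simp)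
      rw [iso v (hμ1 v) _ cov r]
      have hw : ∀ i : (σ : Fin s) → Fin (n σ),
          Wfun (∅ : Finset (Fin s × Fin s)) p μ i = ∏ w, μ w (i w) := by
        intro i; unfold Wfun; simp [dg_empty]
      have tot : (∑ i : (σ : Fin s) → Fin (n σ), Wfun (∅ : Finset (Fin s × Fin s)) p μ i) = 1 := by
        rw [Finset.sum_congr rfl fun i _ => hw i, ← Fintype.prod_sum]
        simp [hμ1]
      rw [tot, mul_one]
    · intro e he; exact absurd he (Finset.notMem_empty e)
  · obtain ⟨e₀, he₀E, hdeg⟩ := hleaf E Finset.Subset.rfl hne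
    set E' := E.erase e₀ with hE'def
    have he₀E' : e₀ ∉ E' := Finset.notMem_erase e₀ E
    have hE'ss : E' ⊆ E := Finset.erase_subset e₀ E
    have hEins : insert e₀ E' = E := Finset.insert_erase he₀E
    have hlu : e₀.1 ≠ e₀.2 := hloop e₀ he₀E
    obtain ⟨IHb, IHc⟩ := IH E' (Finset.erase_ssubset he₀E)
      (fun e he => hloop e (hE'ss he))
      (fun F hF => hleaf F (hF.trans hE'ss))
      p (fun e he => hrow e (hE'ss he)) (fun e he => hcol e (hE'ss he))
    have hWgen : ∀ i : (σ : Fin s) → Fin (n σ), Wfun E p μ i = Wfun E' p μ i *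
        (p e₀.1 e₀.2 (i e₀.1) (i e₀.2) / (μ e₀.1 (i e₀.1) * μ e₀.2 (i e₀.2))) := by
      intro i
      conv_lhs => rw [← hEins]
      unfold Wfun
      rw [Finset.prod_insert he₀E']
      have hvert : ∏ v, (μ v (i v)) ^ ((1:ℤ) - (dg (insert e₀ E') v : ℤ))
          = (∏ v, (μ v (i v)) ^ ((1:ℤ) - (dg E' v : ℤ)))
            * ((μ e₀.1 (i e₀.1))⁻¹ * (μ e₀.2 (i e₀.2))⁻¹) := by
        have pointw : ∀ v, (μ v (i v)) ^ ((1:ℤ) - (dg (insert e₀ E') v : ℤ))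
            = (μ v (i v)) ^ ((1:ℤ) - (dg E' v : ℤ))
              * ((if e₀.1 = v then (μ v (i v))⁻¹ else 1)
                * (if e₀.2 = v then (μ v (i v))⁻¹ else 1)) := by
          intro v
          rw [dg_insert e₀ E' he₀E' v]
          have hmne : μ v (i v) ≠ 0 := ne_of_gt (hμpos v (i v))
          by_cases h1 : e₀.1 = v
          · have h2 : ¬ e₀.2 = v := fun h => hlu (h1.trans h.symm)
            rw [if_pos h1, if_neg h2, if_pos (Or.inl h1)]
            push_cast
            rw [show (1:ℤ) - ((dg E' v : ℤ) + 1) = ((1:ℤ) - (dg E' v : ℤ)) + (-1) by ring,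
              zpow_add₀ hmne]
            simp [zpow_neg]
          · by_cases h2 : e₀.2 = v
            · rw [if_neg h1, if_pos h2, if_pos (Or.inr h2)]
              push_cast
              rw [show (1:ℤ) - ((dg E' v : ℤ) + 1) = ((1:ℤ) - (dg E' v : ℤ)) + (-1) by ring,
                zpow_add₀ hmne]
              simp [zpow_neg]
            · rw [if_neg h1, if_neg h2, if_neg (by tauto)]
              simp
        rw [Finset.prod_congr rfl fun v _ => pointw v, Finset.prod_mul_distrib,
          Finset.prod_mul_distrib, Finset.prod_ite_eq, Finset.prod_ite_eq]
        simp
      rw [hvert]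
      have h1 : μ e₀.1 (i e₀.1) ≠ 0 := ne_of_gt (hμpos _ _)
      have h2 : μ e₀.2 (i e₀.2) ≠ 0 := ne_of_gt (hμpos _ _)
      field_simp
    rcases hdeg with hd1 | hd2
    · -- leaf at first coordinate : ℓ = e₀.1, u = e₀.2
      have fact1 : ∀ e ∈ E', e.1 ≠ e₀.1 ∧ e.2 ≠ e₀.1 := by
        intro e he
        by_contra hcon
        have hinc : e.1 = e₀.1 ∨ e.2 = e₀.1 := by tauto
        have hmem1 : e ∈ E.filter (fun f => f.1 = e₀.1 ∨ f.2 = e₀.1) :=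
          Finset.mem_filter.mpr ⟨hE'ss he, hinc⟩
        have hmem2 : e₀ ∈ E.filter (fun f => f.1 = e₀.1 ∨ f.2 = e₀.1) :=
          Finset.mem_filter.mpr ⟨he₀E, Or.inl rfl⟩
        have hne2 : e ≠ e₀ := Finset.ne_of_mem_erase he
        have h2 : 1 < (E.filter (fun f => f.1 = e₀.1 ∨ f.2 = e₀.1)).card :=
          Finset.one_lt_card.mpr ⟨e, hmem1, e₀, hmem2, hne2⟩
        rw [show (E.filter (fun f => f.1 = e₀.1 ∨ f.2 = e₀.1)).card = dg E e₀.1 from rfl,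
          hd1] at h2
        exact lt_irrefl 1 h2
      set c : Fin (n e₀.1) → Fin (n e₀.2) → ℝ :=
        fun x y => p e₀.1 e₀.2 x y / (μ e₀.1 x * μ e₀.2 y) with hc
      have hW : ∀ i, Wfun E p μ i = Wfun E' p μ i * c (i e₀.1) (i e₀.2) := fun i => by
        rw [hWgen i, hc]
      have cov := wcov E' p μ e₀.1 fact1
      have hc1 : ∀ y, ∑ x, μ e₀.1 x * c x y = 1 := by
        intro y
        have hterm : ∀ x, μ e₀.1 x * c x y = p e₀.1 e₀.2 x y / μ e₀.2 y := by
          intro x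
          have hx : μ e₀.1 x ≠ 0 := ne_of_gt (hμpos _ _)
          have hy : μ e₀.2 y ≠ 0 := ne_of_gt (hμpos _ _)
          rw [hc]
          field_simp
        rw [Finset.sum_congr rfl fun x _ => hterm x, ← Finset.sum_div, hcol e₀ he₀E y,
          div_self (ne_of_gt (hμpos _ _))]
      have hc2 : ∀ x, ∑ y, c x y * μ e₀.2 y = 1 := by
        intro x
        have hterm : ∀ y, c x y * μ e₀.2 y = p e₀.1 e₀.2 x y / μ e₀.1 x := by
          intro y
          have hx : μ e₀.1 x ≠ 0 := ne_of_gt (hμpos _ _)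
          have hy : μ e₀.2 y ≠ 0 := ne_of_gt (hμpos _ _)
          rw [hc]
          field_simp
        rw [Finset.sum_congr rfl fun y _ => hterm y, ← Finset.sum_div, hrow e₀ he₀E x,
          div_self (ne_of_gt (hμpos _ _))]
      have hmargu := IHb e₀.2
      constructor
      · intro v r
        by_cases hv : v = e₀.1
        · subst hv
          exact step1 (hμ1 _) hlu hW cov hmargu hc2 r
        · rw [Finset.sum_congr rfl fun i _ => bmul (i v = r) (Wfun E p μ i),
            step3 (hμ1 e₀.1) hlu hW cov hc1 _
              (fun i x => by simp only [Function.update_of_ne hv]),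
            Finset.sum_congr rfl fun i _ => (bmul (i v = r) (Wfun E' p μ i)).symm]
          exact IHb v r
      · intro e he x y
        by_cases he₀ : e = e₀
        · subst he₀
          rw [step2 (hμ1 e.1) hlu hW cov hmargu x y, hc]
          have hx : μ e.1 x ≠ 0 := ne_of_gt (hμpos _ _)
          have hy : μ e.2 y ≠ 0 := ne_of_gt (hμpos _ _)
          field_simp
        · have heE' : e ∈ E' := Finset.mem_erase.mpr ⟨he₀, he⟩
          rw [Finset.sum_congr rfl fun i _ =>
              bmul (i e.1 = x ∧ i e.2 = y) (Wfun E p μ i),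
            step3 (hμ1 e₀.1) hlu hW cov hc1 _
              (fun i z => by
                simp only [Function.update_of_ne (fact1 e heE').1,
                  Function.update_of_ne (fact1 e heE').2]),
            Finset.sum_congr rfl fun i _ =>
              (bmul (i e.1 = x ∧ i e.2 = y) (Wfun E' p μ i)).symm]
          exact IHc e heE' x y
    · -- leaf at second coordinate : ℓ = e₀.2, u = e₀.1
      have fact1 : ∀ e ∈ E', e.1 ≠ e₀.2 ∧ e.2 ≠ e₀.2 := by
        intro e he
        by_contra hcon
        have hinc : e.1 = e₀.2 ∨ e.2 = e₀.2 := by tauto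
        have hmem1 : e ∈ E.filter (fun f => f.1 = e₀.2 ∨ f.2 = e₀.2) :=
          Finset.mem_filter.mpr ⟨hE'ss he, hinc⟩
        have hmem2 : e₀ ∈ E.filter (fun f => f.1 = e₀.2 ∨ f.2 = e₀.2) :=
          Finset.mem_filter.mpr ⟨he₀E, Or.inr rfl⟩
        have hne2 : e ≠ e₀ := Finset.ne_of_mem_erase he
        have h2 : 1 < (E.filter (fun f => f.1 = e₀.2 ∨ f.2 = e₀.2)).card :=
          Finset.one_lt_card.mpr ⟨e, hmem1, e₀, hmem2, hne2⟩
        rw [show (E.filter (fun f => f.1 = e₀.2 ∨ f.2 = e₀.2)).card = dg E e₀.2 from rfl,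
          hd2] at h2
        exact lt_irrefl 1 h2
      set c : Fin (n e₀.2) → Fin (n e₀.1) → ℝ :=
        fun a b => p e₀.1 e₀.2 b a / (μ e₀.2 a * μ e₀.1 b) with hc
      have hW : ∀ i, Wfun E p μ i = Wfun E' p μ i * c (i e₀.2) (i e₀.1) := fun i => by
        rw [hWgen i, hc]
        ring
      have cov := wcov E' p μ e₀.2 fact1
      have hlu' : e₀.2 ≠ e₀.1 := Ne.symm hlu
      have hc1 : ∀ y, ∑ x, μ e₀.2 x * c x y = 1 := by
        intro y
        have hterm : ∀ x, μ e₀.2 x * c x y = p e₀.1 e₀.2 y x / μ e₀.1 y := by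
          intro x
          have hx : μ e₀.2 x ≠ 0 := ne_of_gt (hμpos _ _)
          have hy : μ e₀.1 y ≠ 0 := ne_of_gt (hμpos _ _)
          rw [hc]
          field_simp
        rw [Finset.sum_congr rfl fun x _ => hterm x, ← Finset.sum_div, hrow e₀ he₀E y,
          div_self (ne_of_gt (hμpos _ _))]
      have hc2 : ∀ x, ∑ y, c x y * μ e₀.1 y = 1 := by
        intro x
        have hterm : ∀ y, c x y * μ e₀.1 y = p e₀.1 e₀.2 y x / μ e₀.2 x := by
          intro y
          have hx : μ e₀.2 x ≠ 0 := ne_of_gt (hμpos _ _)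
          have hy : μ e₀.1 y ≠ 0 := ne_of_gt (hμpos _ _)
          rw [hc]
          field_simp
        rw [Finset.sum_congr rfl fun y _ => hterm y, ← Finset.sum_div, hcol e₀ he₀E x,
          div_self (ne_of_gt (hμpos _ _))]
      have hmargu := IHb e₀.1
      constructor
      · intro v r
        by_cases hv : v = e₀.2
        · subst hv
          exact step1 (hμ1 _) hlu' hW cov hmargu hc2 r
        · rw [Finset.sum_congr rfl fun i _ => bmul (i v = r) (Wfun E p μ i),
            step3 (hμ1 e₀.2) hlu' hW cov hc1 _
              (fun i x => by simp only [Function.update_of_ne hv]),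
            Finset.sum_congr rfl fun i _ => (bmul (i v = r) (Wfun E' p μ i)).symm]
          exact IHb v r
      · intro e he x y
        by_cases he₀ : e = e₀
        · subst he₀
          have hcomm : ∀ i : (σ : Fin s) → Fin (n σ),
              (if i e.1 = x ∧ i e.2 = y then Wfun E p μ i else 0)
                = (if i e.2 = y ∧ i e.1 = x then Wfun E p μ i else 0) := by
            intro i
            exact if_congr and_comm rfl rfl
          rw [Finset.sum_congr rfl fun i _ => hcomm i,
            step2 (hμ1 e.2) hlu' hW cov hmargu y x, hc]
          have hx : μ e.1 x ≠ 0 := ne_of_gt (hμpos _ _)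
          have hy : μ e.2 y ≠ 0 := ne_of_gt (hμpos _ _)
          field_simp
        · have heE' : e ∈ E' := Finset.mem_erase.mpr ⟨he₀, he⟩
          rw [Finset.sum_congr rfl fun i _ =>
              bmul (i e.1 = x ∧ i e.2 = y) (Wfun E p μ i),
            step3 (hμ1 e₀.2) hlu' hW cov hc1 _
              (fun i z => by
                simp only [Function.update_of_ne (fact1 e heE').1,
                  Function.update_of_ne (fact1 e heE').2]),
            Finset.sum_congr rfl fun i _ =>
              (bmul (i e.1 = x ∧ i e.2 = y) (Wfun E' p μ i)).symm]
          exact IHc e heE' x y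

lemma gibbs_term {p q : ℝ} (hp : 0 ≤ p) (hq : 0 ≤ q) (himp : 0 < p → 0 < q) :
    p - q ≤ p * Real.log (p / q) := by
  rcases hp.eq_or_lt with h | h
  · rw [← h, zero_mul]
    linarith
  · have hq' := himp h
    have hlog : Real.log (q / p) ≤ q / p - 1 :=
      Real.log_le_sub_one_of_pos (div_pos hq' h)
    have hneg : Real.log (p / q) = - Real.log (q / p) := by
      rw [← Real.log_inv]
      congr 1
      field_simp
    have hmul := mul_le_mul_of_nonneg_left hlog h.le
    have hqp : p * (q / p) = q := by field_simp
    rw [hneg]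
    nlinarith
  
lemma klsum_decomp (μ : (σ : Fin s) → Fin (n σ) → ℝ) (hμpos : ∀ σ r, 0 < μ σ r)
    (E : Finset (Fin s × Fin s))
    (p q : (σ₁ σ₂ : Fin s) → Fin (n σ₁) → Fin (n σ₂) → ℝ)
    (hqpos : ∀ σ₁ σ₂ x y, 0 < q σ₁ σ₂ x y)
    (M : ((σ : Fin s) → Fin (n σ)) → ℝ) (hM0 : ∀ i, 0 ≤ M i)
    (hppos : ∀ i, 0 < M i → ∀ e ∈ E, 0 < p e.1 e.2 (i e.1) (i e.2)) :
    ∑ i, M i * Real.log (Wfun E p μ i / ∏ e ∈ E, q e.1 e.2 (i e.1) (i e.2))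
      = (∑ e ∈ E, ∑ x, ∑ y, (∑ i, if i e.1 = x ∧ i e.2 = y then M i else 0) *
          Real.log (p e.1 e.2 x y / q e.1 e.2 x y))
        + ∑ v, ((1:ℝ) - (dg E v : ℝ)) *
            ∑ r, (∑ i, if i v = r then M i else 0) * Real.log (μ v r) := by
  have point : ∀ i : (σ : Fin s) → Fin (n σ),
      M i * Real.log (Wfun E p μ i / ∏ e ∈ E, q e.1 e.2 (i e.1) (i e.2))
        = M i * ((∑ e ∈ E, Real.log (p e.1 e.2 (i e.1) (i e.2) / q e.1 e.2 (i e.1) (i e.2)))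
            + ∑ v, ((1:ℝ) - (dg E v : ℝ)) * Real.log (μ v (i v))) := by
    intro i
    rcases (hM0 i).eq_or_lt with h0 | hMi
    · rw [← h0, zero_mul, zero_mul]
    · congr 1
      have hppos' : ∀ e ∈ E, 0 < p e.1 e.2 (i e.1) (i e.2) := hppos i hMi
      have hzpos : ∀ v : Fin s, (0:ℝ) < (μ v (i v)) ^ ((1:ℤ) - (dg E v : ℤ)) :=
        fun v => zpow_pos (hμpos v (i v)) _
      have hprodp : 0 < ∏ e ∈ E, p e.1 e.2 (i e.1) (i e.2) := Finset.prod_pos hppos'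
      have hprodz : 0 < ∏ v, (μ v (i v)) ^ ((1:ℤ) - (dg E v : ℤ)) :=
        Finset.prod_pos fun v _ => hzpos v
      have hprodq : 0 < ∏ e ∈ E, q e.1 e.2 (i e.1) (i e.2) :=
        Finset.prod_pos fun e _ => hqpos _ _ _ _
      unfold Wfun
      rw [Real.log_div (by positivity) (ne_of_gt hprodq),
        Real.log_mul (ne_of_gt hprodp) (ne_of_gt hprodz),
        Real.log_prod (fun e he => ne_of_gt (hppos' e he)),
        Real.log_prod (fun v _ => ne_of_gt (hzpos v)),
        Real.log_prod (fun e _ => ne_of_gt (hqpos _ _ _ _))]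
      have hz : ∀ v : Fin s, Real.log ((μ v (i v)) ^ ((1:ℤ) - (dg E v : ℤ)))
          = ((1:ℝ) - (dg E v : ℝ)) * Real.log (μ v (i v)) := by
        intro v
        rw [Real.log_zpow]
        push_cast
        ring
      rw [Finset.sum_congr rfl fun v _ => hz v]
      have hpq : ∀ e ∈ E, Real.log (p e.1 e.2 (i e.1) (i e.2) / q e.1 e.2 (i e.1) (i e.2))
          = Real.log (p e.1 e.2 (i e.1) (i e.2)) - Real.log (q e.1 e.2 (i e.1) (i e.2)) :=
        fun e he => Real.log_div (ne_of_gt (hppos' e he)) (ne_of_gt (hqpos _ _ _ _))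
      rw [Finset.sum_congr rfl hpq, Finset.sum_sub_distrib]
      ring
  rw [Finset.sum_congr rfl fun i _ => point i]
  simp only [mul_add]
  rw [Finset.sum_add_distrib]
  congr 1
  · simp only [Finset.mul_sum]
    rw [Finset.sum_comm]
    exact Finset.sum_congr rfl fun e _ => group2 M (fun x y => Real.log (p e.1 e.2 x y / q e.1 e.2 x y))
  · simp only [Finset.mul_sum]
    rw [Finset.sum_comm]
    refine Finset.sum_congr rfl fun v _ => ?_
    have : ∀ i : (σ : Fin s) → Fin (n σ),
        M i * (((1:ℝ) - (dg E v : ℝ)) * Real.log (μ v (i v)))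
          = ((1:ℝ) - (dg E v : ℝ)) * (M i * Real.log (μ v (i v))) := fun i => by ring
    rw [Finset.sum_congr rfl fun i _ => this i, ← Finset.mul_sum,
      group1 M (fun r => Real.log (μ v r)), Finset.mul_sum]


noncomputable def pmarg (M : ((σ : Fin s) → Fin (n σ)) → ℝ) (σ₁ σ₂ : Fin s)
    (x : Fin (n σ₁)) (y : Fin (n σ₂)) : ℝ :=
  ∑ i, (if i σ₁ = x ∧ i σ₂ = y then M i else 0)

lemma leaf_of_acyclic (E : Finset (Fin s × Fin s))
    (hloop : ∀ e ∈ E, e.1 ≠ e.2) (horient : ∀ e ∈ E, (e.2, e.1) ∉ E)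
    (hacyc : (SimpleGraph.fromRel (fun a b => (a, b) ∈ E)).IsAcyclic) :
    ∀ F ⊆ E, F.Nonempty → ∃ e ∈ F, dg F e.1 = 1 ∨ dg F e.2 = 1 := by
  classical
  intro F hFE hFne
  by_contra hno
  push_neg at hno
  set G := SimpleGraph.fromRel (fun a b => (a, b) ∈ E) with hG
  set GF := SimpleGraph.fromRel (fun a b => (a, b) ∈ F) with hGF
  have hle : GF ≤ G := by
    intro a b hab
    rw [hGF, SimpleGraph.fromRel_adj] at hab
    rw [hG, SimpleGraph.fromRel_adj]
    exact ⟨hab.1, hab.2.imp (fun h => hFE h) (fun h => hFE h)⟩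
  have hdeg2 : ∀ a : Fin s, (∃ e ∈ F, e.1 = a ∨ e.2 = a) →
      1 < (GF.neighborFinset a).card := by
    rintro a ⟨e, heF, hinc⟩
    have hdg1 : 0 < dg F a :=
      Finset.card_pos.mpr ⟨e, Finset.mem_filter.mpr ⟨heF, hinc⟩⟩
    have hdgne : dg F a ≠ 1 := by
      rcases hinc with h | h
      · rw [← h]; exact (hno e heF).1
      · rw [← h]; exact (hno e heF).2
    have hdg : 1 < dg F a := by omega
    have hmap : ∀ f ∈ F.filter (fun f => f.1 = a ∨ f.2 = a),
        (if f.1 = a then f.2 else f.1) ∈ GF.neighborFinset a := by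
      intro f hf
      obtain ⟨hfF, hfinc⟩ := Finset.mem_filter.mp hf
      rw [SimpleGraph.mem_neighborFinset, hGF, SimpleGraph.fromRel_adj]
      by_cases h1 : f.1 = a
      · rw [if_pos h1]
        refine ⟨by rw [← h1]; exact hloop f (hFE hfF), Or.inl ?_⟩
        rw [← h1]
        simpa using hfF
      · have h2 : f.2 = a := by tauto
        rw [if_neg h1]
        refine ⟨fun h => h1 h.symm, Or.inr ?_⟩
        rw [← h2]
        simpa using hfF
    have hshape : ∀ f ∈ F.filter (fun f => f.1 = a ∨ f.2 = a),
        f = (a, if f.1 = a then f.2 else f.1) ∨ f = (if f.1 = a then f.2 else f.1, a) := by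
      intro f hf
      obtain ⟨hfF, hfinc⟩ := Finset.mem_filter.mp hf
      by_cases h1 : f.1 = a
      · left; rw [if_pos h1, ← h1]
      · right
        have h2 : f.2 = a := by tauto
        rw [if_neg h1, ← h2]
    have hinj : Set.InjOn (fun f : Fin s × Fin s => if f.1 = a then f.2 else f.1)
        (F.filter (fun f => f.1 = a ∨ f.2 = a)) := by
      intro f1 hf1 f2 hf2 heq
      simp only [Finset.coe_filter, Set.mem_setOf_eq] at hf1 hf2
      have hf1' : f1 ∈ F.filter (fun f => f.1 = a ∨ f.2 = a) :=
        Finset.mem_filter.mpr ⟨hf1.1, hf1.2⟩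
      have hf2' : f2 ∈ F.filter (fun f => f.1 = a ∨ f.2 = a) :=
        Finset.mem_filter.mpr ⟨hf2.1, hf2.2⟩
      simp only at heq
      rcases hshape f1 hf1' with h1 | h1 <;> rcases hshape f2 hf2' with h2 | h2
      · rw [h1, h2, heq]
      · -- f1 = (a, w), f2 = (w, a) both in F : contradiction with horient unless degenerate
        exfalso
        have hw1 : f1 ∈ F := hf1.1
        have hw2 : f2 ∈ F := hf2.1
        rw [h1] at hw1
        rw [h2] at hw2
        rw [heq] at hw1
        have := horient _ (hFE hw2)
        rw [h2] at * <;> try skip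
        -- horient f2 : (f2.2, f2.1) ∉ E ; f2 = (w, a) so (a, w) ∉ E
        exact this (hFE (by simpa using hw1))
      · exfalso
        have hw1 : f1 ∈ F := hf1.1
        have hw2 : f2 ∈ F := hf2.1
        rw [h1] at hw1
        rw [h2] at hw2
        rw [heq] at hw1
        have := horient _ (hFE hw1)
        exact this (hFE (by simpa using hw2))
      · rw [h1, h2, heq]
    calc 1 < dg F a := hdg
      _ = ((F.filter (fun f => f.1 = a ∨ f.2 = a)).image
            (fun f => if f.1 = a then f.2 else f.1)).card :=
          (Finset.card_image_of_injOn hinj).symm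
      _ ≤ (GF.neighborFinset a).card :=
          Finset.card_le_card (Finset.image_subset_iff.mpr hmap)
  -- maximal path argument
  set P : ℕ → Prop := fun L => ∃ (a b : Fin s) (w : GF.Walk a b), w.IsPath ∧ w.length = L
    with hP
  obtain ⟨e, heF⟩ := hFne
  have hadj0 : GF.Adj e.1 e.2 := by
    rw [hGF, SimpleGraph.fromRel_adj]
    exact ⟨hloop e (hFE heF), Or.inl (by simpa using heF)⟩
  have hP1 : P 1 := by
    refine ⟨e.1, e.2, SimpleGraph.Walk.cons hadj0 SimpleGraph.Walk.nil, ?_, by simp⟩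
    rw [SimpleGraph.Walk.cons_isPath_iff]
    exact ⟨SimpleGraph.Walk.IsPath.nil, by simp [hloop e (hFE heF)]⟩
  have hbound : ∀ L, P L → L ≤ s := by
    rintro L ⟨a, b, w, hp, hl⟩
    have := hp.length_lt
    simp only [Fintype.card_fin] at this
    omega
  set m := Nat.findGreatest P s with hmdef
  have hm : P m := Nat.findGreatest_spec (hbound 1 hP1) hP1
  have hm1 : 1 ≤ m := Nat.le_findGreatest (hbound 1 hP1) hP1
  have hmax : ∀ L, P L → L ≤ m := fun L hL => Nat.le_findGreatest (hbound L hL) hL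
  obtain ⟨a, b, w, hwp, hwl⟩ := hm
  cases w with
  | nil => simp at hwl; omega
  | @cons _ x₀ _ hadj w' =>
    obtain ⟨hw'path, hanotin⟩ := (SimpleGraph.Walk.cons_isPath_iff hadj w').mp hwp
    have hane : a ≠ x₀ := GF.ne_of_adj hadj
    have hFinc : ∃ f ∈ F, f.1 = a ∨ f.2 = a := by
      have h := hadj
      rw [hGF, SimpleGraph.fromRel_adj] at h
      rcases h.2 with h' | h'
      · exact ⟨(a, x₀), h', Or.inl rfl⟩
      · exact ⟨(x₀, a), h', Or.inr rfl⟩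
    have hcard := hdeg2 a hFinc
    obtain ⟨y, hyN, hyne⟩ := Finset.exists_mem_ne hcard x₀
    have hyadj : GF.Adj a y := by simpa using hyN
    have hyna : y ≠ a := (GF.ne_of_adj hyadj).symm
    by_cases hysup : y ∈ (SimpleGraph.Walk.cons hadj w').support
    · have hqpath : ((SimpleGraph.Walk.cons hadj w').takeUntil y hysup).IsPath :=
        hwp.takeUntil hysup
      have hq1 : ((SimpleGraph.Walk.cons hadj w').takeUntil y hysup).length ≠ 1 := by
        intro hq1
        have hedge : ∀ (q : GF.Walk a y), q.length = 1 → s(a, y) ∈ q.edges := by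
          intro q hq
          cases q with
          | nil => simp at hq
          | @cons _ z _ h1 q' =>
            have hz : z = y := SimpleGraph.Walk.eq_of_length_eq_zero (by simpa using hq)
            subst hz
            simp
        have hinw : s(a, y) ∈ (SimpleGraph.Walk.cons hadj w').edges :=
          SimpleGraph.Walk.edges_takeUntil_subset _ hysup (hedge _ hq1)
        rw [SimpleGraph.Walk.edges_cons, List.mem_cons] at hinw
        rcases hinw with heq | hin
        · rw [Sym2.eq_iff] at heq
          rcases heq with ⟨-, h⟩ | ⟨h, -⟩
          · exact hyne h
          · exact hane h
        · exact hanotin (SimpleGraph.Walk.fst_mem_support_of_mem_edges w' hin)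
      have hrpath : (SimpleGraph.Walk.cons hyadj SimpleGraph.Walk.nil).IsPath := by
        rw [SimpleGraph.Walk.cons_isPath_iff]
        exact ⟨SimpleGraph.Walk.IsPath.nil, by simp [GF.ne_of_adj hyadj]⟩
      have hPeq := hacyc.path_unique
        ⟨((SimpleGraph.Walk.cons hadj w').takeUntil y hysup).mapLe hle, hqpath.mapLe hle⟩
        ⟨(SimpleGraph.Walk.cons hyadj SimpleGraph.Walk.nil).mapLe hle, hrpath.mapLe hle⟩
      have hlen := congrArg (fun p : G.Path a y => p.val.length) hPeq
      simp only [SimpleGraph.Walk.mapLe, SimpleGraph.Walk.length_map] at hlen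
      simp at hlen
      exact hq1 hlen
    · have h2path : (SimpleGraph.Walk.cons hyadj.symm
          (SimpleGraph.Walk.cons hadj w')).IsPath := by
        rw [SimpleGraph.Walk.cons_isPath_iff]
        exact ⟨hwp, hysup⟩
      have hP' : P (m + 1) :=
        ⟨y, b, _, h2path, by simp [SimpleGraph.Walk.length_cons, hwl]⟩
      have := hmax (m + 1) hP'
      omega

end TreeMSBAux

open TreeMSBAux

/-- The optimal tree-structured MSB cost decomposes over edges as the sum of the
bimarginal SB optimal values plus degree-weighted entropies. -/
theorem tree_msb_cost_decomposes_over_edges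
    (s : ℕ) (hs : 2 ≤ s) (n : Fin s → ℕ)
    (μ : (σ : Fin s) → Fin (n σ) → ℝ)
    (hμpos : ∀ σ r, 0 < μ σ r) (hμ1 : ∀ σ, ∑ r, μ σ r = 1)
    (E : Finset (Fin s × Fin s))
    (hloop : ∀ e ∈ E, e.1 ≠ e.2) (horient : ∀ e ∈ E, (e.2, e.1) ∉ E)
    (htree : (SimpleGraph.fromRel (fun a b => (a, b) ∈ E)).Connected ∧
             (SimpleGraph.fromRel (fun a b => (a, b) ∈ E)).IsAcyclic)
    (C : (σ₁ σ₂ : Fin s) → Fin (n σ₁) → Fin (n σ₂) → ℝ) (η : ℝ) (hη : 0 < η)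
    -- bimarginal SB optimal couplings on each edge:
    (Msb : (σ₁ σ₂ : Fin s) → Fin (n σ₁) → Fin (n σ₂) → ℝ)
    (hMsbmem : ∀ e ∈ E, (∀ x y, 0 ≤ Msb e.1 e.2 x y) ∧
      (∀ x, ∑ y, Msb e.1 e.2 x y = μ e.1 x) ∧
      (∀ y, ∑ x, Msb e.1 e.2 x y = μ e.2 y))
    (hMsbopt : ∀ e ∈ E, ∀ N : Fin (n e.1) → Fin (n e.2) → ℝ,
      ((∀ x y, 0 ≤ N x y) ∧ (∀ x, ∑ y, N x y = μ e.1 x) ∧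
        (∀ y, ∑ x, N x y = μ e.2 y)) →
      ∑ x, ∑ y, Msb e.1 e.2 x y *
          Real.log (Msb e.1 e.2 x y / Real.exp (-(C e.1 e.2 x y) / η))
        ≤ ∑ x, ∑ y, N x y * Real.log (N x y / Real.exp (-(C e.1 e.2 x y) / η)))
    -- the optimal tree-structured coupling:
    (M : ((σ : Fin s) → Fin (n σ)) → ℝ)
    (hMmem : (∀ i, 0 ≤ M i) ∧ ∀ (σ : Fin s) (r : Fin (n σ)),
      ∑ i : (τ : Fin s) → Fin (n τ), (if i σ = r then M i else 0) = μ σ r)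
    (hMopt : ∀ N : ((σ : Fin s) → Fin (n σ)) → ℝ,
      ((∀ i, 0 ≤ N i) ∧ ∀ (σ : Fin s) (r : Fin (n σ)),
        ∑ i : (τ : Fin s) → Fin (n τ), (if i σ = r then N i else 0) = μ σ r) →
      ∑ i, M i * Real.log (M i /
          Real.exp (-(∑ e ∈ E, C e.1 e.2 (i e.1) (i e.2)) / η))
        ≤ ∑ i, N i * Real.log (N i /
          Real.exp (-(∑ e ∈ E, C e.1 e.2 (i e.1) (i e.2)) / η))) :
    ∑ i, M i * Real.log (M i /
        Real.exp (-(∑ e ∈ E, C e.1 e.2 (i e.1) (i e.2)) / η))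
      = (∑ e ∈ E, ∑ x, ∑ y, Msb e.1 e.2 x y *
          Real.log (Msb e.1 e.2 x y / Real.exp (-(C e.1 e.2 x y) / η)))
        + ∑ σ : Fin s,
            (((E.filter fun e => e.1 = σ ∨ e.2 = σ).card : ℝ) - 1) *
              (-∑ r, μ σ r * Real.log (μ σ r)) := by

  classical
  obtain ⟨hM0, hMmarg⟩ := hMmem
  set Ke : (σ₁ σ₂ : Fin s) → Fin (n σ₁) → Fin (n σ₂) → ℝ :=
    fun σ₁ σ₂ x y => Real.exp (-(C σ₁ σ₂ x y) / η) with hKe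
  have hKepos : ∀ (σ₁ σ₂ : Fin s) (x : Fin (n σ₁)) (y : Fin (n σ₂)),
      0 < Ke σ₁ σ₂ x y := fun _ _ _ _ => Real.exp_pos _
  have hKsplit : ∀ i : (τ : Fin s) → Fin (n τ),
      Real.exp (-(∑ e ∈ E, C e.1 e.2 (i e.1) (i e.2)) / η)
        = ∏ e ∈ E, Ke e.1 e.2 (i e.1) (i e.2) := by
    intro i
    rw [hKe, ← Real.exp_sum]
    congr 1
    rw [neg_div, Finset.sum_div, ← Finset.sum_neg_distrib]
    exact Finset.sum_congr rfl fun e _ => (neg_div _ _).symm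
  have hleaf := leaf_of_acyclic E hloop horient htree.2
  -- facts about the pair marginals of M
  have hpm0 : ∀ (σ₁ σ₂ : Fin s) (x : Fin (n σ₁)) (y : Fin (n σ₂)),
      0 ≤ pmarg M σ₁ σ₂ x y := by
    intro σ₁ σ₂ x y
    refine Finset.sum_nonneg fun i _ => ?_
    split
    · exact hM0 i
    · exact le_refl 0
  have hpmrow : ∀ (σ₁ σ₂ : Fin s) (x : Fin (n σ₁)),
      ∑ y, pmarg M σ₁ σ₂ x y = μ σ₁ x := by
    intro σ₁ σ₂ x
    unfold pmarg
    rw [Finset.sum_comm]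
    have inner : ∀ i : (τ : Fin s) → Fin (n τ),
        (∑ y, if i σ₁ = x ∧ i σ₂ = y then M i else 0) = (if i σ₁ = x then M i else 0) := by
      intro i
      by_cases h : i σ₁ = x
      · simp only [h, true_and, Finset.sum_ite_eq]
        simp
      · simp [h]
    rw [Finset.sum_congr rfl fun i _ => inner i, hMmarg σ₁ x]
  have hpmcol : ∀ (σ₁ σ₂ : Fin s) (y : Fin (n σ₂)),
      ∑ x, pmarg M σ₁ σ₂ x y = μ σ₂ y := by
    intro σ₁ σ₂ y
    unfold pmarg
    rw [Finset.sum_comm]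
    have inner : ∀ i : (τ : Fin s) → Fin (n τ),
        (∑ x, if i σ₁ = x ∧ i σ₂ = y then M i else 0) = (if i σ₂ = y then M i else 0) := by
      intro i
      by_cases h : i σ₂ = y
      · simp only [h, and_true, Finset.sum_ite_eq]
        simp
      · simp [h]
    rw [Finset.sum_congr rfl fun i _ => inner i, hMmarg σ₂ y]
  have hpmle : ∀ (i : (τ : Fin s) → Fin (n τ)) (σ₁ σ₂ : Fin s),
      M i ≤ pmarg M σ₁ σ₂ (i σ₁) (i σ₂) := by
    intro i σ₁ σ₂
    have key := Finset.single_le_sum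
      (f := fun j : (τ : Fin s) → Fin (n τ) =>
        if j σ₁ = i σ₁ ∧ j σ₂ = i σ₂ then M j else 0)
      (fun j _ => by
        split
        · exact hM0 j
        · exact le_refl 0)
      (Finset.mem_univ i)
    simpa [pmarg] using key
  obtain ⟨Qb, Qc⟩ := core μ hμpos hμ1 E hloop hleaf (pmarg M)
    (fun e _ x => hpmrow e.1 e.2 x) (fun e _ y => hpmcol e.1 e.2 y)
  obtain ⟨Nb, Nc⟩ := core μ hμpos hμ1 E hloop hleaf Msb
    (fun e he => (hMsbmem e he).2.1) (fun e he => (hMsbmem e he).2.2)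
  have hzprod : ∀ i : (τ : Fin s) → Fin (n τ),
      (0:ℝ) < ∏ v, (μ v (i v)) ^ ((1:ℤ) - (dg E v : ℤ)) :=
    fun i => Finset.prod_pos fun v _ => zpow_pos (hμpos v (i v)) _
  have hQpos : ∀ i, 0 < M i → 0 < Wfun E (pmarg M) μ i := by
    intro i hMi
    unfold Wfun
    exact mul_pos
      (Finset.prod_pos fun e _ => lt_of_lt_of_le hMi (hpmle i e.1 e.2)) (hzprod i)
  have hQ0 : ∀ i, 0 ≤ Wfun E (pmarg M) μ i := by
    intro i
    unfold Wfun
    exact mul_nonneg (Finset.prod_nonneg fun e _ => hpm0 e.1 e.2 _ _) (hzprod i).le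
  have hN0 : ∀ i, 0 ≤ Wfun E Msb μ i := by
    intro i
    unfold Wfun
    exact mul_nonneg (Finset.prod_nonneg fun e he => (hMsbmem e he).1 _ _) (hzprod i).le
  have hNfac : ∀ i, 0 < Wfun E Msb μ i → ∀ e ∈ E, 0 < Msb e.1 e.2 (i e.1) (i e.2) := by
    intro i hNi e he
    rcases ((hMsbmem e he).1 (i e.1) (i e.2)).eq_or_lt with h | h
    · exfalso
      unfold Wfun at hNi
      rw [Finset.prod_eq_zero he h.symm, zero_mul] at hNi
      exact lt_irrefl 0 hNi
    · exact h
  have hv0 : (0 : ℕ) < s := by omega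
  set v0 : Fin s := ⟨0, hv0⟩ with hv0def
  have hsum : ∀ (F : ((τ : Fin s) → Fin (n τ)) → ℝ),
      (∀ r, (∑ i, if i v0 = r then F i else 0) = μ v0 r) → ∑ i, F i = 1 := by
    intro F hF
    have expand : ∀ i : (τ : Fin s) → Fin (n τ),
        F i = ∑ r, if i v0 = r then F i else 0 := by
      intro i
      rw [Finset.sum_ite_eq]
      simp
    rw [Finset.sum_congr rfl fun i _ => expand i, Finset.sum_comm,
      Finset.sum_congr rfl fun r _ => hF r, hμ1 v0]
  have hsumM : ∑ i, M i = 1 := hsum M (hMmarg v0)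
  have hsumQ : ∑ i, Wfun E (pmarg M) μ i = 1 := hsum _ (Qb v0)
  -- value of the tree-factorized bimarginal-optimal coupling
  have hNval : (∑ i, Wfun E Msb μ i * Real.log (Wfun E Msb μ i /
        Real.exp (-(∑ e ∈ E, C e.1 e.2 (i e.1) (i e.2)) / η)))
      = (∑ e ∈ E, ∑ x, ∑ y, Msb e.1 e.2 x y *
          Real.log (Msb e.1 e.2 x y / Ke e.1 e.2 x y))
        + ∑ v, ((1:ℝ) - (dg E v : ℝ)) * ∑ r, μ v r * Real.log (μ v r) := by
    rw [Finset.sum_congr rfl fun i (_ : i ∈ Finset.univ) => by rw [hKsplit i]]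
    rw [klsum_decomp μ hμpos E Msb Ke hKepos (Wfun E Msb μ) hN0 hNfac]
    congr 1
    · refine Finset.sum_congr rfl fun e he => Finset.sum_congr rfl fun x _ =>
        Finset.sum_congr rfl fun y _ => ?_
      rw [Nc e he x y]
    · refine Finset.sum_congr rfl fun v _ => ?_
      congr 1
      refine Finset.sum_congr rfl fun r _ => ?_
      rw [Nb v r]
  have hle1 : (∑ i, M i * Real.log (M i /
        Real.exp (-(∑ e ∈ E, C e.1 e.2 (i e.1) (i e.2)) / η)))
      ≤ (∑ e ∈ E, ∑ x, ∑ y, Msb e.1 e.2 x y *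
          Real.log (Msb e.1 e.2 x y / Ke e.1 e.2 x y))
        + ∑ v, ((1:ℝ) - (dg E v : ℝ)) * ∑ r, μ v r * Real.log (μ v r) := by
    rw [← hNval]
    exact hMopt (Wfun E Msb μ) ⟨hN0, Nb⟩
  -- lower bound
  have hsplit : (∑ i, M i * Real.log (M i /
        Real.exp (-(∑ e ∈ E, C e.1 e.2 (i e.1) (i e.2)) / η)))
      = (∑ i, M i * Real.log (M i / Wfun E (pmarg M) μ i))
        + ∑ i, M i * Real.log (Wfun E (pmarg M) μ i /
            ∏ e ∈ E, Ke e.1 e.2 (i e.1) (i e.2)) := by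
    rw [← Finset.sum_add_distrib]
    refine Finset.sum_congr rfl fun i _ => ?_
    rcases (hM0 i).eq_or_lt with h0 | hMi
    · rw [← h0, zero_mul, zero_mul, zero_mul, add_zero]
    · rw [hKsplit i, ← mul_add]
      congr 1
      have hQi := hQpos i hMi
      have hKi : (0:ℝ) < ∏ e ∈ E, Ke e.1 e.2 (i e.1) (i e.2) :=
        Finset.prod_pos fun e _ => hKepos _ _ _ _
      rw [Real.log_div (ne_of_gt hMi) (ne_of_gt hKi),
        Real.log_div (ne_of_gt hMi) (ne_of_gt hQi),
        Real.log_div (ne_of_gt hQi) (ne_of_gt hKi)]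
      ring
  have hQdecomp : (∑ i, M i * Real.log (Wfun E (pmarg M) μ i /
        ∏ e ∈ E, Ke e.1 e.2 (i e.1) (i e.2)))
      = (∑ e ∈ E, ∑ x, ∑ y, pmarg M e.1 e.2 x y *
          Real.log (pmarg M e.1 e.2 x y / Ke e.1 e.2 x y))
        + ∑ v, ((1:ℝ) - (dg E v : ℝ)) * ∑ r, μ v r * Real.log (μ v r) := by
    have base := klsum_decomp μ hμpos E (pmarg M) Ke hKepos M hM0
      (fun i hMi e _ => lt_of_lt_of_le hMi (hpmle i e.1 e.2))
    rw [base]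
    congr 1
    refine Finset.sum_congr rfl fun v _ => ?_
    congr 1
    refine Finset.sum_congr rfl fun r _ => ?_
    rw [hMmarg v r]
  have hgibbs : (0:ℝ) ≤ ∑ i, M i * Real.log (M i / Wfun E (pmarg M) μ i) := by
    have hterm : ∀ i : (τ : Fin s) → Fin (n τ),
        M i - Wfun E (pmarg M) μ i ≤ M i * Real.log (M i / Wfun E (pmarg M) μ i) :=
      fun i => gibbs_term (hM0 i) (hQ0 i) (hQpos i)
    have hsum0 : (∑ i, (M i - Wfun E (pmarg M) μ i)) = 0 := by
      rw [Finset.sum_sub_distrib, hsumM, hsumQ, sub_self]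
    calc (0:ℝ) = ∑ i, (M i - Wfun E (pmarg M) μ i) := hsum0.symm
      _ ≤ _ := Finset.sum_le_sum fun i _ => hterm i
  have hKL : (∑ e ∈ E, ∑ x, ∑ y, Msb e.1 e.2 x y *
        Real.log (Msb e.1 e.2 x y / Ke e.1 e.2 x y))
      ≤ ∑ e ∈ E, ∑ x, ∑ y, pmarg M e.1 e.2 x y *
          Real.log (pmarg M e.1 e.2 x y / Ke e.1 e.2 x y) := by
    refine Finset.sum_le_sum fun e he => ?_
    exact hMsbopt e he (pmarg M e.1 e.2)
      ⟨fun x y => hpm0 e.1 e.2 x y, fun x => hpmrow e.1 e.2 x, fun y => hpmcol e.1 e.2 y⟩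
  have hvert : (∑ σ : Fin s, (((E.filter fun e => e.1 = σ ∨ e.2 = σ).card : ℝ) - 1) *
        (-∑ r, μ σ r * Real.log (μ σ r)))
      = ∑ v, ((1:ℝ) - (dg E v : ℝ)) * ∑ r, μ v r * Real.log (μ v r) := by
    refine Finset.sum_congr rfl fun σ _ => ?_
    rw [show (E.filter fun e => e.1 = σ ∨ e.2 = σ).card = dg E σ from rfl]
    ring
  rw [hvert]
  have hge : (∑ e ∈ E, ∑ x, ∑ y, Msb e.1 e.2 x y *
        Real.log (Msb e.1 e.2 x y / Ke e.1 e.2 x y))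
        + (∑ v, ((1:ℝ) - (dg E v : ℝ)) * ∑ r, μ v r * Real.log (μ v r))
      ≤ ∑ i, M i * Real.log (M i /
          Real.exp (-(∑ e ∈ E, C e.1 e.2 (i e.1) (i e.2)) / η)) := by
    rw [hsplit, hQdecomp]
    linarith
  linarith
end

section
/- Optimal tree-MSB coupling is the product of edge couplings divided by vertex powers: for a tree T = (V, E) with strictly positive marginals and edge-additive Gibbs kernel, the optimal coupling satisfies (M*_T)_{i₁,...,i_s} = [ Π_{(σ₁,σ₂)∈E} (M*_{σ₁σ₂})_{i_{σ₁}, i_{σ₂}} ] / [ Π_{σ=1}^{s} μ_σ(i_σ)^{deg(σ)-1} ], where M*_{σ₁σ₂} is the optimal bimarginal Schrödinger bridge coupling on edge (σ₁,σ₂). -/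
open Finset

lemma acyclic_exists_leaf {V : Type*} [Fintype V] [DecidableEq V] {G : SimpleGraph V}
    (hG : G.IsAcyclic) {u₀ v₀ : V} (h₀ : G.Adj u₀ v₀) :
    ∃ u x, G.Adj u x ∧ ∀ w, G.Adj u w → w = x := by
  classical
  -- take a maximal length path
  obtain ⟨⟨u, v, p⟩, -, hmax⟩ := Finset.exists_max_image
    (Finset.univ : Finset (Σ u : V, Σ v : V, G.Path u v)) (fun q => q.2.2.val.length)
    ⟨⟨u₀, v₀, SimpleGraph.Path.singleton h₀⟩, Finset.mem_univ _⟩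
  have hmax' : ∀ (a b : V) (q : G.Path a b), q.val.length ≤ p.val.length := by
    intro a b q; exact hmax ⟨a, b, q⟩ (Finset.mem_univ _)
  -- all neighbors of u are equal to the second vertex of p
  have key : ∀ w, G.Adj u w → p.val.support.tail.head? = some w := by
    intro w hw
    have hwsup : w ∈ p.val.support := by
      by_contra hww
      have hq : (SimpleGraph.Walk.cons hw.symm p.val).IsPath := p.prop.cons hww
      have := hmax' w v ⟨SimpleGraph.Walk.cons hw.symm p.val, hq⟩
      simp [SimpleGraph.Walk.length_cons] at this
    have huniq : (⟨p.val.takeUntil w hwsup, p.prop.takeUntil hwsup⟩ : G.Path u w)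
        = SimpleGraph.Path.singleton hw := hG.path_unique _ _
    have h2 : p.val.takeUntil w hwsup = SimpleGraph.Walk.cons hw SimpleGraph.Walk.nil :=
      congrArg Subtype.val huniq
    have h3 : p.val = SimpleGraph.Walk.cons hw (p.val.dropUntil w hwsup) := by
      conv_lhs => rw [← p.val.take_spec hwsup]
      rw [h2]
      simp
    rw [h3]
    simp [SimpleGraph.Walk.support_cons]
    exact (SimpleGraph.Walk.support_eq_cons _).symm ▸ rfl
  -- u has at least one neighbor
  have hne : p.val.length ≠ 0 := by
    have := hmax' u₀ v₀ (SimpleGraph.Path.singleton h₀)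
    simp [SimpleGraph.Path.singleton] at this
    omega
  obtain ⟨x, hx⟩ : ∃ x, G.Adj u x := by
    cases hp : p.val with
    | nil => rw [hp] at hne; simp at hne
    | cons h q => exact ⟨_, h⟩
  refine ⟨u, x, hx, fun w hw => ?_⟩
  have := (key w hw).symm.trans (key x hx)
  exact (Option.some.injEq _ _).mp this

open Finset

section Glue

variable {s : ℕ} (n : Fin s → ℕ)

/-- Reconstruct a point of the product from one coordinate and the rest. -/
def glue (u : Fin s) (y : Fin (n u)) (g : ∀ τ : {τ : Fin s // τ ≠ u}, Fin (n τ.val)) :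
    ∀ τ, Fin (n τ) :=
  (Equiv.piSplitAt u (fun τ => Fin (n τ))).symm (y, g)

@[simp] lemma glue_self (u : Fin s) (y : Fin (n u)) (g) : glue n u y g u = y := by
  simp [glue]

lemma glue_ne (u : Fin s) (y : Fin (n u)) (g) {τ : Fin s} (h : τ ≠ u) :
    glue n u y g τ = g ⟨τ, h⟩ := by
  simp [glue, h]

lemma sum_glue (u : Fin s) (F : (∀ τ, Fin (n τ)) → ℝ) :
    ∑ i, F i = ∑ y : Fin (n u), ∑ g : ∀ τ : {τ : Fin s // τ ≠ u}, Fin (n τ.val),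
      F (glue n u y g) := by
  rw [← Equiv.sum_comp (Equiv.piSplitAt u (fun τ => Fin (n τ))).symm F,
    Fintype.sum_prod_type]
  rfl

lemma prod_glue (u : Fin s) (y : Fin (n u)) (g) (f : ∀ τ, Fin (n τ) → ℝ) :
    ∏ τ, f τ (glue n u y g τ)
      = f u y * ∏ τ' : {τ : Fin s // τ ≠ u}, f τ'.val (g τ') := by
  rw [← Finset.mul_prod_erase Finset.univ _ (Finset.mem_univ u), glue_self]
  congr 1
  calc ∏ x ∈ Finset.univ.erase u, f x (glue n u y g x)
      = ∏ τ' : {τ : Fin s // τ ≠ u}, f τ'.val (glue n u y g τ'.val) :=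
        Finset.prod_subtype _ (by simp) _
    _ = ∏ τ' : {τ : Fin s // τ ≠ u}, f τ'.val (g τ') :=
        Finset.prod_congr rfl fun τ' _ => by rw [glue_ne n u y g τ'.2]

end Glue

/-- Degree of a vertex in an oriented edge finset. -/
def degE {s : ℕ} (Es : Finset (Fin s × Fin s)) (τ : Fin s) : ℕ :=
  (Es.filter fun e => e.1 = τ ∨ e.2 = τ).card

/-- The candidate (unnormalised) tree coupling. -/
noncomputable def Nf {s : ℕ} {n : Fin s → ℕ} (μ : (σ : Fin s) → Fin (n σ) → ℝ)
    (W : (σ₁ σ₂ : Fin s) → Fin (n σ₁) → Fin (n σ₂) → ℝ)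
    (Es : Finset (Fin s × Fin s)) (i : (τ : Fin s) → Fin (n τ)) : ℝ :=
  (∏ e ∈ Es, W e.1 e.2 (i e.1) (i e.2)) *
    ∏ τ, μ τ (i τ) ^ ((1:ℤ) - (degE Es τ : ℤ))

set_option maxHeartbeats 2000000 in
lemma forest_marginal_step {s : ℕ} (n : Fin s → ℕ) (hn : ∀ σ, Nonempty (Fin (n σ)))
    (μ : (σ : Fin s) → Fin (n σ) → ℝ)
    (hμpos : ∀ σ r, 0 < μ σ r) (hμ1 : ∀ σ, ∑ r, μ σ r = 1)
    (W : (σ₁ σ₂ : Fin s) → Fin (n σ₁) → Fin (n σ₂) → ℝ)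
    (E' : Finset (Fin s × Fin s)) (e₀ : Fin s × Fin s) (he₀ : e₀ ∈ E')
    (u p : Fin s) (hup : u ≠ p)
    (hfu : E'.filter (fun e => e.1 = u ∨ e.2 = u) = {e₀})
    (hinc : ∀ τ : Fin s, (e₀.1 = τ ∨ e₀.2 = τ) ↔ (τ = u ∨ τ = p))
    (V : Fin (n u) → Fin (n p) → ℝ)
    (hVedge : ∀ i : (τ : Fin s) → Fin (n τ),
      W e₀.1 e₀.2 (i e₀.1) (i e₀.2) = V (i u) (i p))
    (hVu : ∀ z, ∑ w, V z w = μ u z) (hVp : ∀ w, ∑ z, V z w = μ p w)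
    (ihE : ∀ (σ : Fin s) (r : Fin (n σ)),
      ∑ i : (τ : Fin s) → Fin (n τ),
        (if i σ = r then Nf μ W (E'.erase e₀) i else 0) = μ σ r) :
    ∀ (σ : Fin s) (r : Fin (n σ)),
      ∑ i : (τ : Fin s) → Fin (n τ),
        (if i σ = r then Nf μ W E' i else 0) = μ σ r := by
  classical
  intro σ r
  set E'' := E'.erase e₀ with hE''
  have hpu : p ≠ u := hup.symm
  set p' : {τ : Fin s // τ ≠ u} := ⟨p, hpu⟩ with hp'
  -- degree bookkeeping
  have hdegu : degE E' u = 1 := by rw [degE, hfu]; simp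
  have hdegu'' : degE E'' u = 0 := by
    rw [degE, hE'', Finset.filter_erase, hfu]
    simp
  have h0filter : E''.filter (fun e => e.1 = u ∨ e.2 = u) = ∅ :=
    Finset.card_eq_zero.mp hdegu''
  have hnotu : ∀ e ∈ E'', e.1 ≠ u ∧ e.2 ≠ u := by
    intro e he
    constructor <;> intro h
    · have hm : e ∈ E''.filter (fun e => e.1 = u ∨ e.2 = u) :=
        Finset.mem_filter.mpr ⟨he, Or.inl h⟩
      rw [h0filter] at hm
      exact absurd hm (Finset.notMem_empty e)
    · have hm : e ∈ E''.filter (fun e => e.1 = u ∨ e.2 = u) :=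
        Finset.mem_filter.mpr ⟨he, Or.inr h⟩
      rw [h0filter] at hm
      exact absurd hm (Finset.notMem_empty e)
  have he₀p : e₀ ∈ E'.filter (fun e => e.1 = p ∨ e.2 = p) :=
    Finset.mem_filter.mpr ⟨he₀, (hinc p).mpr (Or.inr rfl)⟩
  have hdegp : (1:ℤ) - (degE E'' p : ℤ) = ((1:ℤ) - (degE E' p : ℤ)) + 1 := by
    rw [degE, degE, hE'', Finset.filter_erase,
      Finset.card_erase_of_mem he₀p]
    have hpos : 1 ≤ (E'.filter (fun e => e.1 = p ∨ e.2 = p)).card :=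
      Finset.card_pos.mpr ⟨e₀, he₀p⟩
    push_cast [Nat.cast_sub hpos]
    ring
  have hdegoth : ∀ τ, τ ≠ u → τ ≠ p → degE E'' τ = degE E' τ := by
    intro τ hτu hτp
    rw [degE, degE, hE'', Finset.filter_erase, Finset.erase_eq_of_notMem]
    intro hmem
    rcases (hinc τ).mp (Finset.mem_filter.mp hmem).2 with h | h
    · exact hτu h
    · exact hτp h
  -- pointwise factorisation
  have hK5 : ∀ i : (τ : Fin s) → Fin (n τ),
      Nf μ W E' i = Nf μ W E'' i * V (i u) (i p)
        * (μ u (i u))⁻¹ * (μ p (i p))⁻¹ := by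
    intro i
    have hedge : ∏ e ∈ E', W e.1 e.2 (i e.1) (i e.2)
        = W e₀.1 e₀.2 (i e₀.1) (i e₀.2) * ∏ e ∈ E'', W e.1 e.2 (i e.1) (i e.2) :=
      (Finset.mul_prod_erase E' _ he₀).symm
    have hvert : ∏ τ, μ τ (i τ) ^ ((1:ℤ) - (degE E' τ : ℤ))
        = (∏ τ, μ τ (i τ) ^ ((1:ℤ) - (degE E'' τ : ℤ)))
          * ((μ u (i u))⁻¹ * (μ p (i p))⁻¹) := by
      have hAB : ∀ τ : Fin s, μ τ (i τ) ^ ((1:ℤ) - (degE E' τ : ℤ))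
          = μ τ (i τ) ^ ((1:ℤ) - (degE E'' τ : ℤ))
            * (if τ = u then (μ u (i u))⁻¹ else if τ = p then (μ p (i p))⁻¹ else 1) := by
        intro τ
        by_cases hτu : τ = u
        · subst hτu
          rw [if_pos rfl, hdegu, hdegu'']
          push_cast
          rw [zpow_zero, zpow_one]
          exact (mul_inv_cancel₀ (hμpos _ _).ne').symm
        · by_cases hτp : τ = p
          · subst hτp
            rw [if_neg hτu, if_pos rfl, hdegp,
              zpow_add_one₀ (hμpos _ (i _)).ne']
            rw [mul_assoc, mul_inv_cancel₀ (hμpos _ _).ne', mul_one]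
          · rw [if_neg hτu, if_neg hτp, hdegoth τ hτu hτp, mul_one]
      rw [Finset.prod_congr rfl (fun τ _ => hAB τ), Finset.prod_mul_distrib]
      congr 1
      rw [← Finset.mul_prod_erase Finset.univ _ (Finset.mem_univ u), if_pos rfl,
        ← Finset.mul_prod_erase _ _
          (Finset.mem_erase.mpr ⟨hpu, Finset.mem_univ p⟩),
        if_neg hpu, if_pos rfl]
      rw [Finset.prod_eq_one, mul_one]
      intro τ hτ
      have hτmem := Finset.mem_erase.mp hτ
      have hτp' : τ ≠ p := hτmem.1
      have hτu' : τ ≠ u := (Finset.mem_erase.mp hτmem.2).1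
      rw [if_neg hτu', if_neg hτp']
    rw [Nf, Nf, hedge, hvert, hVedge i]
    ring
  -- independence of the u-coordinate
  obtain ⟨z₀⟩ := hn u
  set D : (∀ τ : {τ : Fin s // τ ≠ u}, Fin (n τ.val)) → ℝ :=
    fun g => Nf μ W E'' (glue n u z₀ g) * (μ u z₀)⁻¹ with hD
  have hNfglue : ∀ (z : Fin (n u)) g, Nf μ W E'' (glue n u z g) = μ u z * D g := by
    have hpair : ∀ (z z' : Fin (n u)) g,
        Nf μ W E'' (glue n u z g) * (μ u z)⁻¹
          = Nf μ W E'' (glue n u z' g) * (μ u z')⁻¹ := by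
      intro z z' g
      have hedge : ∀ z'' : Fin (n u), ∏ e ∈ E'', W e.1 e.2 (glue n u z'' g e.1) (glue n u z'' g e.2)
          = ∏ e ∈ E''.attach, W e.1.1 e.1.2 (g ⟨e.1.1, (hnotu e.1 e.2).1⟩)
              (g ⟨e.1.2, (hnotu e.1 e.2).2⟩) := by
        intro z''
        rw [← Finset.prod_attach E''
          (fun e => W e.1 e.2 (glue n u z'' g e.1) (glue n u z'' g e.2))]
        refine Finset.prod_congr rfl fun e _ => ?_
        rw [glue_ne n u z'' g (hnotu e.1 e.2).1, glue_ne n u z'' g (hnotu e.1 e.2).2]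
      have hvert : ∀ z'' : Fin (n u), ∏ τ, μ τ (glue n u z'' g τ) ^ ((1:ℤ) - (degE E'' τ : ℤ))
          = μ u z'' * ∏ τ' : {τ : Fin s // τ ≠ u},
              μ τ'.val (g τ') ^ ((1:ℤ) - (degE E'' τ'.val : ℤ)) := by
        intro z''
        rw [prod_glue n u z'' g (fun τ v => μ τ v ^ ((1:ℤ) - (degE E'' τ : ℤ)))]
        rw [hdegu'']
        norm_num
      rw [Nf, Nf, hedge z, hedge z', hvert z, hvert z']
      field_simp [(hμpos u z).ne', (hμpos u z').ne']
    intro z g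
    have hth := hpair z z₀ g
    show Nf μ W E'' (glue n u z g)
      = μ u z * (Nf μ W E'' (glue n u z₀ g) * (μ u z₀)⁻¹)
    rw [← hth, mul_comm (μ u z), mul_assoc, inv_mul_cancel₀ (hμpos u z).ne',
      mul_one]
  have hK5glue : ∀ (z : Fin (n u)) g, Nf μ W E' (glue n u z g)
      = D g * V z (g p') * (μ p (g p'))⁻¹ := by
    intro z g
    rw [hK5, hNfglue, glue_self, glue_ne n u z g hpu]
    show μ u z * D g * V z (g p') * (μ u z)⁻¹ * (μ p (g p'))⁻¹ = _
    field_simp [(hμpos u z).ne', (hμpos u z₀).ne',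
      (hμpos p (g ⟨p, hpu⟩)).ne']
  -- the key sum identity for the smaller forest
  have hSsum : ∀ (w : Fin (n p)),
      ∑ g : ∀ τ : {τ : Fin s // τ ≠ u}, Fin (n τ.val),
        (if g p' = w then D g else 0) = μ p w := by
    intro w
    have hip := ihE p w
    rw [sum_glue n u (fun i => if i p = w then Nf μ W E'' i else 0)] at hip
    have hterm : ∀ (z : Fin (n u)) g,
        (if (glue n u z g) p = w then Nf μ W E'' (glue n u z g) else 0)
          = μ u z * (if g p' = w then D g else 0) := by
      intro z g
      rw [glue_ne n u z g hpu]
      by_cases h : g p' = w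
      · rw [if_pos h, if_pos h, hNfglue]
      · rw [if_neg h, if_neg h, mul_zero]
    rw [Finset.sum_congr rfl
      (fun z _ => Finset.sum_congr rfl (fun g _ => hterm z g)),
      ← Finset.sum_mul_sum, hμ1 u, one_mul] at hip
    exact hip
  by_cases hσu : σ = u
  · subst hσu
    calc ∑ i : (τ : Fin s) → Fin (n τ), (if i σ = r then Nf μ W E' i else 0)
        = ∑ z : Fin (n σ), ∑ g, (if z = r then D g * V z (g p') * (μ p (g p'))⁻¹
            else 0) := by
          rw [sum_glue n σ (fun i => if i σ = r then Nf μ W E' i else 0)]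
          refine Finset.sum_congr rfl fun z _ => Finset.sum_congr rfl fun g _ => ?_
          rw [glue_self]
          by_cases h : z = r
          · rw [if_pos h, if_pos h, hK5glue]
          · rw [if_neg h, if_neg h]
      _ = ∑ g, D g * V r (g p') * (μ p (g p'))⁻¹ := by
          rw [Finset.sum_congr rfl (fun z (_ : z ∈ Finset.univ) =>
            show (∑ g, (if z = r then D g * V z (g p') * (μ p (g p'))⁻¹ else 0))
              = (if z = r then ∑ g, D g * V z (g p') * (μ p (g p'))⁻¹ else 0) by
            by_cases h : z = r
            · rw [if_pos h]
              exact Finset.sum_congr rfl fun g _ => if_pos h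
            · rw [if_neg h]
              simp [h]), Finset.sum_ite_eq' Finset.univ r]
          simp
      _ = ∑ w : Fin (n p), (V r w * (μ p w)⁻¹)
            * ∑ g, (if g p' = w then D g else 0) := by
          have hgw : ∀ g, D g * V r (g p') * (μ p (g p'))⁻¹
              = ∑ w : Fin (n p), (if g p' = w then (V r w * (μ p w)⁻¹) * D g
                  else 0) := by
            intro g
            rw [Finset.sum_ite_eq Finset.univ (g p')]
            simp only [Finset.mem_univ, if_true]
            ring
          rw [Finset.sum_congr rfl (fun g _ => hgw g), Finset.sum_comm]
          refine Finset.sum_congr rfl fun w _ => ?_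
          rw [Finset.mul_sum]
          refine Finset.sum_congr rfl fun g _ => ?_
          by_cases h : g p' = w
          · rw [if_pos h, if_pos h]
          · rw [if_neg h, if_neg h, mul_zero]
      _ = ∑ w : Fin (n p), V r w := by
          refine Finset.sum_congr rfl fun w _ => ?_
          rw [hSsum w, mul_assoc, inv_mul_cancel₀ (hμpos p w).ne', mul_one]
      _ = μ σ r := hVu r
  · set σ' : {τ : Fin s // τ ≠ u} := ⟨σ, hσu⟩ with hσ'
    calc ∑ i : (τ : Fin s) → Fin (n τ), (if i σ = r then Nf μ W E' i else 0)
        = ∑ z : Fin (n u), ∑ g, (if g σ' = r then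
            D g * V z (g p') * (μ p (g p'))⁻¹ else 0) := by
          rw [sum_glue n u (fun i => if i σ = r then Nf μ W E' i else 0)]
          refine Finset.sum_congr rfl fun z _ => Finset.sum_congr rfl fun g _ => ?_
          rw [glue_ne n u z g hσu]
          by_cases h : g σ' = r
          · rw [if_pos h, if_pos h, hK5glue]
          · rw [if_neg h, if_neg h]
      _ = ∑ g, (if g σ' = r then D g else 0) := by
          rw [Finset.sum_comm]
          refine Finset.sum_congr rfl fun g _ => ?_
          by_cases h : g σ' = r
          · simp only [if_pos h]
            have : ∑ z : Fin (n u), D g * V z (g p') * (μ p (g p'))⁻¹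
                = D g * (μ p (g p'))⁻¹ * ∑ z, V z (g p') := by
              rw [Finset.mul_sum]
              exact Finset.sum_congr rfl fun z _ => by ring
            rw [this, hVp (g p'), mul_assoc, inv_mul_cancel₀ (hμpos p (g p')).ne',
              mul_one]
          · simp [h]
      _ = ∑ z : Fin (n u), ∑ g, (if (glue n u z g) σ = r then
            Nf μ W E'' (glue n u z g) else 0) := by
          have hterm : ∀ (z : Fin (n u)) g,
              (if (glue n u z g) σ = r then Nf μ W E'' (glue n u z g) else 0)
                = μ u z * (if g σ' = r then D g else 0) := by
            intro z g
            rw [glue_ne n u z g hσu]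
            by_cases h : g σ' = r
            · rw [if_pos h, if_pos h, hNfglue]
            · rw [if_neg h, if_neg h, mul_zero]
          rw [Finset.sum_congr rfl
            (fun z _ => Finset.sum_congr rfl (fun g _ => hterm z g)),
            ← Finset.sum_mul_sum, hμ1 u, one_mul]
      _ = ∑ i : (τ : Fin s) → Fin (n τ), (if i σ = r then Nf μ W E'' i else 0) :=
          (sum_glue n u (fun i => if i σ = r then Nf μ W E'' i else 0)).symm
      _ = μ σ r := ihE σ r

lemma isAcyclic_anti {V : Type*} {G H : SimpleGraph V} (hle : G ≤ H)
    (hH : H.IsAcyclic) : G.IsAcyclic :=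
  fun _v c hc => hH (c.mapLe hle) (hc.mapLe hle)

set_option maxHeartbeats 2000000 in
lemma forest_marginal {s : ℕ} (n : Fin s → ℕ) (hn : ∀ σ, Nonempty (Fin (n σ)))
    (μ : (σ : Fin s) → Fin (n σ) → ℝ)
    (hμpos : ∀ σ r, 0 < μ σ r) (hμ1 : ∀ σ, ∑ r, μ σ r = 1)
    (W : (σ₁ σ₂ : Fin s) → Fin (n σ₁) → Fin (n σ₂) → ℝ)
    (E' : Finset (Fin s × Fin s))
    (hloop : ∀ e ∈ E', e.1 ≠ e.2) (horient : ∀ e ∈ E', (e.2, e.1) ∉ E')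
    (hacyc : (SimpleGraph.fromRel (fun a b => (a, b) ∈ E')).IsAcyclic)
    (hW : ∀ e ∈ E', (∀ x, ∑ y, W e.1 e.2 x y = μ e.1 x) ∧
      (∀ y, ∑ x, W e.1 e.2 x y = μ e.2 y)) :
    ∀ (σ : Fin s) (r : Fin (n σ)),
      ∑ i : (τ : Fin s) → Fin (n τ),
        (if i σ = r then Nf μ W E' i else 0) = μ σ r := by
  classical
  revert hloop horient hacyc hW
  induction E' using Finset.strongInduction with
  | _ E' ih =>
    intro hloop horient hacyc hW
    rcases E'.eq_empty_or_nonempty with hE | hE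
    · subst hE
      intro σ r
      have hNf : ∀ i : (τ : Fin s) → Fin (n τ),
          Nf μ W (∅ : Finset (Fin s × Fin s)) i = ∏ τ, μ τ (i τ) := by
        intro i
        rw [Nf]
        simp [degE]
      have h1 : ∀ i : (τ : Fin s) → Fin (n τ),
          (if i σ = r then Nf μ W (∅ : Finset (Fin s × Fin s)) i else 0)
            = (if i σ = r then ∏ τ, μ τ (i τ) else 0) := by
        intro i
        rw [hNf]
      rw [Finset.sum_congr rfl fun i _ => h1 i,
        sum_glue n σ (fun i => if i σ = r then ∏ τ, μ τ (i τ) else 0)]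
      have h2 : ∀ (z : Fin (n σ)) g,
          (if (glue n σ z g) σ = r then ∏ τ, μ τ (glue n σ z g τ) else 0)
            = (if z = r then μ σ z
                * ∏ τ' : {τ : Fin s // τ ≠ σ}, μ τ'.val (g τ') else 0) := by
        intro z g
        by_cases h : z = r
        · rw [if_pos, if_pos h, prod_glue n σ z g (fun τ v => μ τ v)]
          rw [glue_self]
          exact h
        · rw [if_neg, if_neg h]
          rw [glue_self]
          exact h
      rw [Finset.sum_congr rfl fun z _ =>
        Finset.sum_congr rfl fun g _ => h2 z g]
      have h3 : ∑ g : ∀ τ' : {τ : Fin s // τ ≠ σ}, Fin (n τ'.val),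
          ∏ τ' : {τ : Fin s // τ ≠ σ}, μ τ'.val (g τ') = 1 := by
        rw [← Fintype.prod_sum (fun (τ' : {τ : Fin s // τ ≠ σ}) v => μ τ'.val v)]
        exact Finset.prod_eq_one fun τ' _ => hμ1 τ'.val
      have h4 : ∀ z : Fin (n σ),
          (∑ g : ∀ τ' : {τ : Fin s // τ ≠ σ}, Fin (n τ'.val),
            (if z = r then μ σ z
              * ∏ τ' : {τ : Fin s // τ ≠ σ}, μ τ'.val (g τ') else 0))
          = (if z = r then μ σ z else 0) := by
        intro z
        by_cases h : z = r
        · simp only [if_pos h, ← Finset.mul_sum, h3, mul_one]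
        · simp [h]
      rw [Finset.sum_congr rfl fun z _ => h4 z, Finset.sum_ite_eq' Finset.univ r]
      simp
    · obtain ⟨e₁, he₁⟩ := hE
      have hadj : (SimpleGraph.fromRel (fun a b => (a, b) ∈ E')).Adj e₁.1 e₁.2 :=
        (SimpleGraph.fromRel_adj _ _ _).mpr
          ⟨hloop e₁ he₁, Or.inl (by simpa using he₁)⟩
      obtain ⟨u, x, hux, huniq⟩ := acyclic_exists_leaf hacyc hadj
      rw [SimpleGraph.fromRel_adj] at hux
      obtain ⟨hune, hmem⟩ := hux
      have hnbr : ∀ e ∈ E', (e.1 = u → e.2 = x) ∧ (e.2 = u → e.1 = x) := by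
        intro e he
        have hee : (e.1, e.2) ∈ E' := by simpa using he
        constructor
        · intro h1
          refine huniq e.2 ((SimpleGraph.fromRel_adj _ _ _).mpr ⟨?_, Or.inl ?_⟩)
          · intro hh
            exact hloop e he (h1.trans hh)
          · rw [← h1]; exact hee
        · intro h2
          refine huniq e.1 ((SimpleGraph.fromRel_adj _ _ _).mpr ⟨?_, Or.inr ?_⟩)
          · intro hh
            exact hloop e he (hh.symm.trans h2.symm)
          · rw [← h2]; exact hee
      -- common data for the recursive call
      have hrec : ∀ e₀ ∈ E', ∀ (σ : Fin s) (r : Fin (n σ)),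
          ∑ i : (τ : Fin s) → Fin (n τ),
            (if i σ = r then Nf μ W (E'.erase e₀) i else 0) = μ σ r := by
        intro e₀ he₀
        have hle : SimpleGraph.fromRel (fun a b => (a, b) ∈ E'.erase e₀)
            ≤ SimpleGraph.fromRel (fun a b => (a, b) ∈ E') := by
          intro a b hab
          rw [SimpleGraph.fromRel_adj] at hab ⊢
          exact ⟨hab.1, hab.2.imp Finset.mem_of_mem_erase Finset.mem_of_mem_erase⟩
        exact ih (E'.erase e₀) (Finset.erase_ssubset he₀)
          (fun e he => hloop e (Finset.mem_of_mem_erase he))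
          (fun e he hmem2 => horient e (Finset.mem_of_mem_erase he)
            (Finset.mem_of_mem_erase hmem2))
          (isAcyclic_anti hle hacyc)
          (fun e he => hW e (Finset.mem_of_mem_erase he))
      rcases hmem with hm | hm
      · -- the edge at the leaf is (u, x)
        have hfu : E'.filter (fun e => e.1 = u ∨ e.2 = u) = {(u, x)} := by
          ext e
          simp only [Finset.mem_filter, Finset.mem_singleton]
          constructor
          · rintro ⟨he, hor | hor⟩
            · have h2 := (hnbr e he).1 hor
              exact Prod.ext hor h2
            · have h1 := (hnbr e he).2 hor
              exfalso
              have hexu : e = (x, u) := Prod.ext h1 hor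
              rw [hexu] at he
              exact horient (x, u) he hm
          · rintro rfl
            exact ⟨hm, Or.inl rfl⟩
        refine forest_marginal_step n hn μ hμpos hμ1 W E' (u, x) hm u x hune hfu
          ?_ (W u x) (fun i => rfl) (fun z => (hW (u, x) hm).1 z)
          (fun w => (hW (u, x) hm).2 w) (hrec (u, x) hm)
        intro τ
        constructor
        · rintro (h | h)
          · exact Or.inl h.symm
          · exact Or.inr h.symm
        · rintro (h | h)
          · exact Or.inl h.symm
          · exact Or.inr h.symm
      · -- the edge at the leaf is (x, u)
        have hfu : E'.filter (fun e => e.1 = u ∨ e.2 = u) = {(x, u)} := by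
          ext e
          simp only [Finset.mem_filter, Finset.mem_singleton]
          constructor
          · rintro ⟨he, hor | hor⟩
            · have h2 := (hnbr e he).1 hor
              exfalso
              have hexu : e = (u, x) := Prod.ext hor h2
              rw [hexu] at he
              exact horient (u, x) he hm
            · have h1 := (hnbr e he).2 hor
              exact Prod.ext h1 hor
          · rintro rfl
            exact ⟨hm, Or.inr rfl⟩
        refine forest_marginal_step n hn μ hμpos hμ1 W E' (x, u) hm u x hune hfu
          ?_ (fun z w => W x u w z) (fun i => rfl)
          (fun z => (hW (x, u) hm).2 z) (fun w => (hW (x, u) hm).1 w)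
          (hrec (x, u) hm)
        intro τ
        constructor
        · rintro (h | h)
          · exact Or.inr h.symm
          · exact Or.inl h.symm
        · rintro (h | h)
          · exact Or.inr h.symm
          · exact Or.inl h.symm


lemma mul_log_div_expand {u q : ℝ} (hq : q ≠ 0) :
    u * Real.log (u / q) = u * Real.log u - u * Real.log q := by
  rcases eq_or_ne u 0 with h | h
  · simp [h]
  · rw [Real.log_div h hq]; ring

lemma sb_positive {a b : ℕ} [Nonempty (Fin a)] [Nonempty (Fin b)]
    (μ₁ : Fin a → ℝ) (μ₂ : Fin b → ℝ)
    (h₁pos : ∀ x, 0 < μ₁ x) (h₂pos : ∀ y, 0 < μ₂ y)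
    (h₁ : ∑ x, μ₁ x = 1) (h₂ : ∑ y, μ₂ y = 1)
    (q : Fin a → Fin b → ℝ) (hq : ∀ x y, 0 < q x y)
    (m : Fin a → Fin b → ℝ) (hm0 : ∀ x y, 0 ≤ m x y)
    (hrow : ∀ x, ∑ y, m x y = μ₁ x) (hcol : ∀ y, ∑ x, m x y = μ₂ y)
    (hopt : ∀ N : Fin a → Fin b → ℝ,
      ((∀ x y, 0 ≤ N x y) ∧ (∀ x, ∑ y, N x y = μ₁ x) ∧ (∀ y, ∑ x, N x y = μ₂ y)) →
      ∑ x, ∑ y, m x y * Real.log (m x y / q x y)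
        ≤ ∑ x, ∑ y, N x y * Real.log (N x y / q x y)) :
    ∀ x y, 0 < m x y := by
  by_contra hcon
  push_neg at hcon
  obtain ⟨x₀, y₀, hxy0⟩ := hcon
  have hm00 : m x₀ y₀ = 0 := le_antisymm hxy0 (hm0 x₀ y₀)
  set P : Fin a → Fin b → ℝ := fun x y => μ₁ x * μ₂ y with hP
  have hPpos : ∀ x y, 0 < P x y := fun x y => mul_pos (h₁pos x) (h₂pos y)
  set Fm := ∑ x, ∑ y, m x y * Real.log (m x y / q x y) with hFm
  set FP := ∑ x, ∑ y, P x y * Real.log (P x y / q x y) with hFP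
  set p₀ := P x₀ y₀ with hp₀
  have hp₀pos : 0 < p₀ := hPpos x₀ y₀
  set t := min (1/2 : ℝ) (Real.exp (-(FP - Fm + 1) / p₀)) with ht
  have ht0 : 0 < t := lt_min (by norm_num) (Real.exp_pos _)
  have ht1 : t ≤ 1/2 := min_le_left _ _
  have hlogt : Real.log t ≤ -(FP - Fm + 1) / p₀ := by
    calc Real.log t ≤ Real.log (Real.exp (-(FP - Fm + 1) / p₀)) :=
          Real.log_le_log ht0 (min_le_right _ _)
      _ = _ := Real.log_exp _
  set Nt : Fin a → Fin b → ℝ := fun x y => (1 - t) * m x y + t * P x y with hNt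
  have hNtfeas : (∀ x y, 0 ≤ Nt x y) ∧ (∀ x, ∑ y, Nt x y = μ₁ x) ∧
      (∀ y, ∑ x, Nt x y = μ₂ y) := by
    refine ⟨fun x y => add_nonneg (mul_nonneg (by linarith) (hm0 x y))
      (mul_nonneg ht0.le (hPpos x y).le), fun x => ?_, fun y => ?_⟩
    · have h2' : ∑ y, P x y = μ₁ x := by
        simp only [hP, ← Finset.mul_sum, h₂, mul_one]
      simp only [hNt, Finset.sum_add_distrib, ← Finset.mul_sum, hrow, h2']
      ring
    · have h1' : ∑ x, P x y = μ₂ y := by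
        simp only [hP, ← Finset.sum_mul, h₁, one_mul]
      simp only [hNt, Finset.sum_add_distrib, ← Finset.mul_sum, hcol, h1']
      ring
  -- per-entry convexity bound
  have hentry : ∀ x y, Nt x y * Real.log (Nt x y / q x y)
      ≤ (1 - t) * (m x y * Real.log (m x y / q x y))
        + t * (P x y * Real.log (P x y / q x y))
        + (if x = x₀ then (if y = y₀ then t * p₀ * Real.log t else 0) else 0) := by
    intro x y
    simp only [hNt]
    by_cases hx : x = x₀ ∧ y = y₀
    · obtain ⟨hx', hy'⟩ := hx
      rw [hx', hy', hm00]
      simp only [if_pos rfl, mul_zero, add_zero, zero_add, zero_mul, if_true]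
      have h1 : t * P x₀ y₀ * Real.log (t * P x₀ y₀ / q x₀ y₀)
          = t * (P x₀ y₀ * Real.log (P x₀ y₀ / q x₀ y₀)) + t * P x₀ y₀ * Real.log t := by
        rw [Real.log_div (by positivity) (hq x₀ y₀).ne',
          Real.log_mul ht0.ne' (hPpos x₀ y₀).ne',
          Real.log_div (hPpos x₀ y₀).ne' (hq x₀ y₀).ne']
        ring
      rw [h1, hp₀]
    · have hite : (if x = x₀ then (if y = y₀ then t * p₀ * Real.log t else 0) else 0)
          = 0 := by
        by_cases h1 : x = x₀
        · subst h1
          have h2 : y ≠ y₀ := fun h => hx ⟨rfl, h⟩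
          simp [h2]
        · simp [h1]
      rw [hite, add_zero]
      have hconv := Real.convexOn_mul_log.2 (Set.mem_Ici.mpr (hm0 x y))
        (Set.mem_Ici.mpr (hPpos x y).le) (by linarith : (0:ℝ) ≤ 1 - t) ht0.le
        (by ring)
      simp only [smul_eq_mul] at hconv
      rw [mul_log_div_expand (hq x y).ne',
        mul_log_div_expand (hq x y).ne', mul_log_div_expand (hq x y).ne']
      have hlogq : ((1 - t) * m x y + t * P x y) * Real.log (q x y)
          = (1 - t) * (m x y * Real.log (q x y)) + t * (P x y * Real.log (q x y)) := by
        ring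
      linarith [hconv, hlogq.le]
  have hFt : ∑ x, ∑ y, Nt x y * Real.log (Nt x y / q x y)
      ≤ (1 - t) * Fm + t * FP + t * p₀ * Real.log t := by
    calc ∑ x, ∑ y, Nt x y * Real.log (Nt x y / q x y)
        ≤ ∑ x, ∑ y, ((1 - t) * (m x y * Real.log (m x y / q x y))
            + t * (P x y * Real.log (P x y / q x y))
            + (if x = x₀ then (if y = y₀ then t * p₀ * Real.log t else 0) else 0)) :=
          Finset.sum_le_sum (fun x _ => Finset.sum_le_sum (fun y _ => hentry x y))
      _ = (1 - t) * Fm + t * FP + t * p₀ * Real.log t := by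
          have hitesum : ∑ x : Fin a, ∑ y : Fin b,
              (if x = x₀ then (if y = y₀ then t * p₀ * Real.log t else 0) else 0)
              = t * p₀ * Real.log t := by
            rw [Finset.sum_eq_single x₀ (fun x _ hxne => by simp [hxne])
              (fun h => absurd (Finset.mem_univ x₀) h)]
            simp
          simp only [Finset.sum_add_distrib, ← Finset.mul_sum, hitesum]
          rw [hFm, hFP]
  have hle := hopt Nt hNtfeas
  have h5 : 0 ≤ t * (FP - Fm) + t * p₀ * Real.log t := by nlinarith [hle, hFt]
  have h6 : 0 ≤ (FP - Fm) + p₀ * Real.log t := by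
    by_contra hneg
    push_neg at hneg
    nlinarith [h5, mul_pos ht0 (neg_pos.mpr hneg)]
  have h7 : p₀ * Real.log t ≤ -(FP - Fm + 1) := by
    have := mul_le_mul_of_nonneg_left hlogt hp₀pos.le
    rwa [mul_div_cancel₀ _ hp₀pos.ne'] at this
  linarith

lemma sb_gibbs {a b : ℕ} [Nonempty (Fin a)] [Nonempty (Fin b)]
    (μ₁ : Fin a → ℝ) (μ₂ : Fin b → ℝ)
    (h₁pos : ∀ x, 0 < μ₁ x) (h₂pos : ∀ y, 0 < μ₂ y)
    (h₁ : ∑ x, μ₁ x = 1) (h₂ : ∑ y, μ₂ y = 1)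
    (q : Fin a → Fin b → ℝ) (hq : ∀ x y, 0 < q x y)
    (m : Fin a → Fin b → ℝ) (hm0 : ∀ x y, 0 ≤ m x y)
    (hrow : ∀ x, ∑ y, m x y = μ₁ x) (hcol : ∀ y, ∑ x, m x y = μ₂ y)
    (hopt : ∀ N : Fin a → Fin b → ℝ,
      ((∀ x y, 0 ≤ N x y) ∧ (∀ x, ∑ y, N x y = μ₁ x) ∧ (∀ y, ∑ x, N x y = μ₂ y)) →
      ∑ x, ∑ y, m x y * Real.log (m x y / q x y)
        ≤ ∑ x, ∑ y, N x y * Real.log (N x y / q x y)) :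
    ∃ f : Fin a → ℝ, ∃ g : Fin b → ℝ, (∀ x y, 0 < m x y) ∧
      ∀ x y, m x y = q x y * Real.exp (f x + g y) := by
  have hpos := sb_positive μ₁ μ₂ h₁pos h₂pos h₁ h₂ q hq m hm0 hrow hcol hopt
  set r : Fin a → Fin b → ℝ := fun x y => Real.log (m x y / q x y) with hr
  have hquad : ∀ x x' y y', r x y + r x' y' = r x y' + r x' y := by
    intro x x' y y'
    by_cases hxx : x = x'
    · subst hxx; ring
    by_cases hyy : y = y'
    · subst hyy; ring
    set d : Fin a → Fin b → ℝ := fun i j =>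
      (if i = x then (if j = y then (1:ℝ) else 0) - (if j = y' then 1 else 0) else 0)
      + (if i = x' then (if j = y' then (1:ℝ) else 0) - (if j = y then 1 else 0) else 0)
      with hd
    have hd2 : ∀ i j, |d i j| ≤ 2 := by
      intro i j
      simp only [hd]
      split_ifs <;> norm_num
    have hdrow : ∀ i, ∑ j, d i j = 0 := by
      intro i
      simp only [hd]
      rw [Finset.sum_add_distrib]
      have h1 : ∑ j, (if i = x then (if j = y then (1:ℝ) else 0)
          - (if j = y' then 1 else 0) else 0) = 0 := by
        by_cases h : i = x
        · simp [h, Finset.sum_sub_distrib, Finset.sum_ite_eq']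
        · simp [h]
      have h2 : ∑ j, (if i = x' then (if j = y' then (1:ℝ) else 0)
          - (if j = y then 1 else 0) else 0) = 0 := by
        by_cases h : i = x'
        · simp [h, Finset.sum_sub_distrib, Finset.sum_ite_eq']
        · simp [h]
      rw [h1, h2, add_zero]
    have hdcol : ∀ j, ∑ i, d i j = 0 := by
      intro j
      simp only [hd]
      rw [Finset.sum_add_distrib]
      rw [Finset.sum_ite_eq' Finset.univ x
        (fun _ => (if j = y then (1:ℝ) else 0) - (if j = y' then 1 else 0)),
        Finset.sum_ite_eq' Finset.univ x'
        (fun _ => (if j = y' then (1:ℝ) else 0) - (if j = y then 1 else 0))]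
      simp only [Finset.mem_univ, if_true]
      ring
    obtain ⟨⟨i₀, j₀⟩, -, hminle⟩ := Finset.exists_min_image
      (Finset.univ : Finset (Fin a × Fin b)) (fun p => m p.1 p.2)
      ⟨(Classical.arbitrary _, Classical.arbitrary _), Finset.mem_univ _⟩
    set c := m i₀ j₀ with hcdef
    have hc0 : 0 < c := hpos _ _
    have hcle : ∀ i j, c ≤ m i j := fun i j => hminle (i, j) (Finset.mem_univ _)
    set ψ : ℝ → ℝ := fun t => ∑ i, ∑ j,
      (m i j + t * d i j) * Real.log ((m i j + t * d i j) / q i j) with hψ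
    have hfeas : ∀ t : ℝ, |t| < c/2 →
        ((∀ i j, 0 ≤ m i j + t * d i j) ∧
          (∀ i, ∑ j, (m i j + t * d i j) = μ₁ i) ∧
          (∀ j, ∑ i, (m i j + t * d i j) = μ₂ j)) := by
      intro t ht
      refine ⟨fun i j => ?_, fun i => ?_, fun j => ?_⟩
      · have h1 : |t * d i j| ≤ c := by
          rw [abs_mul]
          calc |t| * |d i j| ≤ (c/2) * 2 :=
                mul_le_mul ht.le (hd2 i j) (abs_nonneg _) (by positivity)
            _ = c := by ring
        have h2 := neg_abs_le (t * d i j)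
        have h3 := hcle i j
        linarith
      · rw [Finset.sum_add_distrib, hrow, ← Finset.mul_sum, hdrow, mul_zero, add_zero]
      · rw [Finset.sum_add_distrib, hcol, ← Finset.mul_sum, hdcol, mul_zero, add_zero]
    have hψ0 : ψ 0 = ∑ x1, ∑ y1, m x1 y1 * Real.log (m x1 y1 / q x1 y1) := by
      simp [hψ]
    have hlocmin : IsLocalMin ψ 0 := by
      have hball := Metric.ball_mem_nhds (0:ℝ) (by positivity : (0:ℝ) < c/2)
      refine Filter.eventually_of_mem hball (fun t ht => ?_)
      rw [Metric.mem_ball, Real.dist_eq, sub_zero] at ht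
      rw [hψ0]
      exact hopt _ (hfeas t ht)
    have hentryderiv : ∀ i j, HasDerivAt
        (fun t => (m i j + t * d i j) * Real.log ((m i j + t * d i j) / q i j))
        (d i j * (r i j + 1)) 0 := by
      intro i j
      have hA : HasDerivAt (fun t : ℝ => m i j + t * d i j) (d i j) 0 :=
        (hasDerivAt_mul_const (d i j)).const_add (m i j)
      have hA0 : m i j + 0 * d i j ≠ 0 := by simpa using (hpos i j).ne'
      have hlog := hA.log hA0
      have h1 := hA.mul hlog
      have h2 := hA.mul_const (Real.log (q i j))
      have h3 := h1.sub h2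
      have h4 : HasDerivAt
          (fun t => (m i j + t * d i j) * Real.log ((m i j + t * d i j) / q i j))
          (d i j * Real.log (m i j + 0 * d i j)
            + (m i j + 0 * d i j) * (d i j / (m i j + 0 * d i j))
            - d i j * Real.log (q i j)) 0 := by
        refine h3.congr_of_eventuallyEq (Filter.Eventually.of_forall (fun t => ?_))
        exact mul_log_div_expand (hq i j).ne'
      simp only [zero_mul, add_zero] at h4
      have hmd : m i j * (d i j / m i j) = d i j := by
        rw [mul_comm]
        exact div_mul_cancel₀ _ (hpos i j).ne'
      rw [hmd] at h4
      have heq : d i j * Real.log (m i j) + d i j - d i j * Real.log (q i j)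
          = d i j * (r i j + 1) := by
        rw [hr]
        simp only []
        rw [Real.log_div (hpos i j).ne' (hq i j).ne']
        ring
      rw [heq] at h4
      exact h4
    have hderiv : HasDerivAt ψ (∑ i, ∑ j, d i j * (r i j + 1)) 0 :=
      HasDerivAt.fun_sum (fun i _ => HasDerivAt.fun_sum (fun j _ => hentryderiv i j))
    have hzero : (∑ i, ∑ j, d i j * (r i j + 1)) = 0 :=
      hlocmin.hasDerivAt_eq_zero hderiv
    have hswap : ∀ (z z' : Fin b) (i : Fin a),
        ∑ j, ((if j = z then (1:ℝ) else 0) - (if j = z' then 1 else 0)) * (r i j + 1)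
          = r i z - r i z' := by
      intro z z' i
      simp [sub_mul, ite_mul, Finset.sum_sub_distrib, Finset.sum_ite_eq']
    have inner : ∀ i, ∑ j, d i j * (r i j + 1)
        = (if i = x then r i y - r i y' else 0)
          + (if i = x' then r i y' - r i y else 0) := by
      intro i
      have hterm : ∀ j, d i j * (r i j + 1)
          = (if i = x then ((if j = y then (1:ℝ) else 0)
              - (if j = y' then 1 else 0)) * (r i j + 1) else 0)
            + (if i = x' then ((if j = y' then (1:ℝ) else 0)
              - (if j = y then 1 else 0)) * (r i j + 1) else 0) := by
        intro j
        simp only [hd]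
        split_ifs <;> ring
      rw [Finset.sum_congr rfl (fun j _ => hterm j), Finset.sum_add_distrib]
      congr 1
      · by_cases h : i = x
        · simp only [h, if_true, eq_self_iff_true]
          exact hswap y y' x
        · simp [h]
      · by_cases h : i = x'
        · simp only [h, if_true, eq_self_iff_true]
          exact hswap y' y x'
        · simp [h]
    have hsum : (∑ i, ∑ j, d i j * (r i j + 1))
        = r x y + r x' y' - r x y' - r x' y := by
      rw [Finset.sum_congr rfl (fun i _ => inner i), Finset.sum_add_distrib,
        Finset.sum_ite_eq' Finset.univ x (fun i => r i y - r i y'),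
        Finset.sum_ite_eq' Finset.univ x' (fun i => r i y' - r i y)]
      simp only [Finset.mem_univ, if_true]
      ring
    rw [hsum] at hzero
    linarith
  -- build the potentials
  obtain ⟨x₂⟩ := (inferInstance : Nonempty (Fin a))
  obtain ⟨y₂⟩ := (inferInstance : Nonempty (Fin b))
  refine ⟨fun x => r x y₂ - r x₂ y₂, fun y => r x₂ y, hpos, fun x y => ?_⟩
  have hfg : (r x y₂ - r x₂ y₂) + r x₂ y = r x y := by
    have := hquad x x₂ y y₂
    linarith
  rw [hfg, hr]
  rw [Real.exp_log (div_pos (hpos x y) (hq x y)), mul_comm,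
    div_mul_cancel₀ _ (hq x y).ne']

lemma klg (p q : ℝ) (hp : 0 ≤ p) (hq : 0 < q) :
    (p - q ≤ p * Real.log (p / q)) ∧ (p ≠ q → p - q < p * Real.log (p / q)) := by
  rcases eq_or_lt_of_le hp with h0 | h0
  · constructor
    · rw [← h0]
      simp only [zero_mul, zero_sub]
      linarith
    · intro _
      rw [← h0]
      simp only [zero_mul, zero_sub]
      linarith
  · have hkey : Real.log (p / q) = - Real.log (q / p) := by
      rw [← Real.log_inv]
      congr 1
      rw [inv_div]
    have hqp : p * (q / p - 1) = q - p := by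
      field_simp
    constructor
    · have hlog := Real.log_le_sub_one_of_pos (div_pos hq h0)
      have h2 := mul_le_mul_of_nonneg_left hlog h0.le
      rw [hkey]
      nlinarith
    · intro hne
      have hlog := Real.log_lt_sub_one_of_pos (div_pos hq h0) (by
        intro h1
        apply hne
        field_simp at h1
        linarith)
      have h2 := mul_lt_mul_of_pos_left hlog h0
      rw [hkey]
      nlinarith

set_option maxHeartbeats 2000000 in
/-- The optimal tree-structured MSB coupling is the product of the optimal
edge (bimarginal SB) couplings divided by powers of the vertex marginals. -/
theorem tree_msb_coupling_product_formula
    (s : ℕ) (hs : 2 ≤ s) (n : Fin s → ℕ)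
    (μ : (σ : Fin s) → Fin (n σ) → ℝ)
    (hμpos : ∀ σ r, 0 < μ σ r) (hμ1 : ∀ σ, ∑ r, μ σ r = 1)
    (E : Finset (Fin s × Fin s))
    (hloop : ∀ e ∈ E, e.1 ≠ e.2) (horient : ∀ e ∈ E, (e.2, e.1) ∉ E)
    (htree : (SimpleGraph.fromRel (fun a b => (a, b) ∈ E)).Connected ∧
             (SimpleGraph.fromRel (fun a b => (a, b) ∈ E)).IsAcyclic)
    (C : (σ₁ σ₂ : Fin s) → Fin (n σ₁) → Fin (n σ₂) → ℝ) (η : ℝ) (hη : 0 < η)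
    (Msb : (σ₁ σ₂ : Fin s) → Fin (n σ₁) → Fin (n σ₂) → ℝ)
    (hMsbmem : ∀ e ∈ E, (∀ x y, 0 ≤ Msb e.1 e.2 x y) ∧
      (∀ x, ∑ y, Msb e.1 e.2 x y = μ e.1 x) ∧
      (∀ y, ∑ x, Msb e.1 e.2 x y = μ e.2 y))
    (hMsbopt : ∀ e ∈ E, ∀ N : Fin (n e.1) → Fin (n e.2) → ℝ,
      ((∀ x y, 0 ≤ N x y) ∧ (∀ x, ∑ y, N x y = μ e.1 x) ∧
        (∀ y, ∑ x, N x y = μ e.2 y)) →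
      ∑ x, ∑ y, Msb e.1 e.2 x y *
          Real.log (Msb e.1 e.2 x y / Real.exp (-(C e.1 e.2 x y) / η))
        ≤ ∑ x, ∑ y, N x y * Real.log (N x y / Real.exp (-(C e.1 e.2 x y) / η)))
    (M : ((σ : Fin s) → Fin (n σ)) → ℝ)
    (hMmem : (∀ i, 0 ≤ M i) ∧ ∀ (σ : Fin s) (r : Fin (n σ)),
      ∑ i : (τ : Fin s) → Fin (n τ), (if i σ = r then M i else 0) = μ σ r)
    (hMopt : ∀ N : ((σ : Fin s) → Fin (n σ)) → ℝ,
      ((∀ i, 0 ≤ N i) ∧ ∀ (σ : Fin s) (r : Fin (n σ)),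
        ∑ i : (τ : Fin s) → Fin (n τ), (if i σ = r then N i else 0) = μ σ r) →
      ∑ i, M i * Real.log (M i /
          Real.exp (-(∑ e ∈ E, C e.1 e.2 (i e.1) (i e.2)) / η))
        ≤ ∑ i, N i * Real.log (N i /
          Real.exp (-(∑ e ∈ E, C e.1 e.2 (i e.1) (i e.2)) / η))) :
    ∀ i : (σ : Fin s) → Fin (n σ),
      M i = (∏ e ∈ E, Msb e.1 e.2 (i e.1) (i e.2)) /
        ∏ σ : Fin s, μ σ (i σ) ^ ((E.filter fun e => e.1 = σ ∨ e.2 = σ).card - 1) := by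
  classical
  -- each state space is nonempty
  have hne : ∀ σ, Nonempty (Fin (n σ)) := by
    intro σ
    rcases Nat.eq_zero_or_pos (n σ) with h | h
    · exfalso
      haveI : IsEmpty (Fin (n σ)) := by rw [h]; infer_instance
      have h0 : ∑ r : Fin (n σ), μ σ r = 0 := by
        rw [Finset.univ_eq_empty, Finset.sum_empty]
      rw [hμ1 σ] at h0
      norm_num at h0
    · exact ⟨⟨0, h⟩⟩
  -- Gibbs structure of the bimarginal bridges
  have hGibbs : ∀ e ∈ E, ∃ fe : Fin (n e.1) → ℝ, ∃ ge : Fin (n e.2) → ℝ,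
      (∀ x y, 0 < Msb e.1 e.2 x y) ∧
      ∀ x y, Msb e.1 e.2 x y
        = Real.exp (-(C e.1 e.2 x y) / η) * Real.exp (fe x + ge y) := by
    intro e he
    haveI := hne e.1
    haveI := hne e.2
    obtain ⟨hnn, hr, hc⟩ := hMsbmem e he
    exact sb_gibbs (μ e.1) (μ e.2) (hμpos e.1) (hμpos e.2) (hμ1 e.1) (hμ1 e.2)
      (fun x y => Real.exp (-(C e.1 e.2 x y) / η)) (fun x y => Real.exp_pos _)
      (Msb e.1 e.2) hnn hr hc (hMsbopt e he)
  choose! f g hfg using hGibbs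
  have hMsbpos : ∀ e ∈ E, ∀ x y, 0 < Msb e.1 e.2 x y := fun e he => (hfg e he).1
  have hMsbeq : ∀ e ∈ E, ∀ x y, Msb e.1 e.2 x y
      = Real.exp (-(C e.1 e.2 x y) / η) * Real.exp (f e x + g e y) :=
    fun e he => (hfg e he).2
  -- the candidate coupling
  have hNpos : ∀ i, 0 < Nf μ Msb E i := by
    intro i
    rw [Nf]
    exact mul_pos (Finset.prod_pos fun e he => hMsbpos e he _ _)
      (Finset.prod_pos fun σ _ => zpow_pos (hμpos σ _) _)
  have hNmarg := forest_marginal n hne μ hμpos hμ1 Msb E hloop horient htree.2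
    (fun e he => ⟨(hMsbmem e he).2.1, (hMsbmem e he).2.2⟩)
  -- total masses
  have hsum_of_marg : ∀ (P : ((σ : Fin s) → Fin (n σ)) → ℝ),
      (∀ (σ : Fin s) (r : Fin (n σ)),
        ∑ i : (τ : Fin s) → Fin (n τ), (if i σ = r then P i else 0) = μ σ r) →
      ∑ i, P i = 1 := by
    intro P hP
    have σ0 : Fin s := ⟨0, by omega⟩
    have h1 : ∑ r : Fin (n σ0), ∑ i : (τ : Fin s) → Fin (n τ),
        (if i σ0 = r then P i else 0) = 1 := by
      rw [Finset.sum_congr rfl fun r _ => hP σ0 r]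
      exact hμ1 σ0
    rw [Finset.sum_comm] at h1
    calc ∑ i, P i = ∑ i : (τ : Fin s) → Fin (n τ), ∑ r : Fin (n σ0),
          (if i σ0 = r then P i else 0) := by
          refine Finset.sum_congr rfl fun i _ => ?_
          rw [Finset.sum_ite_eq]
          simp
      _ = 1 := h1
  have hMsum : ∑ i, M i = 1 := hsum_of_marg M hMmem.2
  have hNsum : ∑ i, Nf μ Msb E i = 1 := hsum_of_marg _ hNmarg
  -- expectations of single-coordinate functions are determined by the marginals
  have hcoord : ∀ (P : ((σ : Fin s) → Fin (n σ)) → ℝ),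
      (∀ (σ : Fin s) (r : Fin (n σ)),
        ∑ i : (τ : Fin s) → Fin (n τ), (if i σ = r then P i else 0) = μ σ r) →
      ∀ (σ : Fin s) (φ : Fin (n σ) → ℝ),
        ∑ i : (τ : Fin s) → Fin (n τ), P i * φ (i σ) = ∑ r, μ σ r * φ r := by
    intro P hP σ φ
    have h1 : ∀ i : (τ : Fin s) → Fin (n τ),
        P i * φ (i σ) = ∑ r, (if i σ = r then P i else 0) * φ r := by
      intro i
      have h2 : ∀ r, (if i σ = r then P i else 0) * φ r
          = (if i σ = r then P i * φ r else 0) := by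
        intro r
        split_ifs <;> ring
      rw [Finset.sum_congr rfl fun r _ => h2 r, Finset.sum_ite_eq]
      simp
    rw [Finset.sum_congr rfl fun i _ => h1 i, Finset.sum_comm]
    refine Finset.sum_congr rfl fun r _ => ?_
    rw [← Finset.sum_mul, hP σ r]
  -- log of the candidate density against the Gibbs kernel
  have hlogSplit : ∀ i : (τ : Fin s) → Fin (n τ),
      Real.log (Nf μ Msb E i
          / Real.exp (-(∑ e ∈ E, C e.1 e.2 (i e.1) (i e.2)) / η))
        = (∑ e ∈ E, (f e (i e.1) + g e (i e.2)))
          + ∑ σ, (((1:ℤ) - (degE E σ : ℤ) : ℤ) : ℝ) * Real.log (μ σ (i σ)) := by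
    intro i
    have hprodpos : 0 < ∏ e ∈ E, Msb e.1 e.2 (i e.1) (i e.2) :=
      Finset.prod_pos fun e he => hMsbpos e he _ _
    have hzpos : 0 < ∏ σ, μ σ (i σ) ^ ((1:ℤ) - (degE E σ : ℤ)) :=
      Finset.prod_pos fun σ _ => zpow_pos (hμpos σ _) _
    rw [Real.log_div (hNpos i).ne' (Real.exp_pos _).ne', Real.log_exp, Nf,
      Real.log_mul hprodpos.ne' hzpos.ne',
      Real.log_prod (fun e he => (hMsbpos e he _ _).ne'),
      Real.log_prod (fun σ _ => (zpow_pos (hμpos σ (i σ)) _).ne')]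
    have h1 : ∀ e ∈ E, Real.log (Msb e.1 e.2 (i e.1) (i e.2))
        = -(C e.1 e.2 (i e.1) (i e.2)) / η + (f e (i e.1) + g e (i e.2)) := by
      intro e he
      rw [hMsbeq e he, ← Real.exp_add, Real.log_exp]
    have h2 : ∀ σ : Fin s, Real.log (μ σ (i σ) ^ ((1:ℤ) - (degE E σ : ℤ)))
        = (((1:ℤ) - (degE E σ : ℤ) : ℤ) : ℝ) * Real.log (μ σ (i σ)) :=
      fun σ => Real.log_zpow _ _
    rw [Finset.sum_congr rfl h1, Finset.sum_congr rfl (fun σ _ => h2 σ),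
      Finset.sum_add_distrib]
    have h3 : ∑ e ∈ E, -(C e.1 e.2 (i e.1) (i e.2)) / η
        = -(∑ e ∈ E, C e.1 e.2 (i e.1) (i e.2)) / η := by
      rw [← Finset.sum_div, ← Finset.sum_neg_distrib]
    rw [h3]
    ring
  -- the cross entropy against the candidate is the same for all couplings
  set cval : ℝ := (∑ e ∈ E, ((∑ r, μ e.1 r * f e r) + ∑ r, μ e.2 r * g e r))
      + ∑ σ, ∑ r, μ σ r * ((((1:ℤ) - (degE E σ : ℤ) : ℤ) : ℝ) * Real.log (μ σ r))
    with hcval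
  have hconst : ∀ (P : ((σ : Fin s) → Fin (n σ)) → ℝ),
      (∀ (σ : Fin s) (r : Fin (n σ)),
        ∑ i : (τ : Fin s) → Fin (n τ), (if i σ = r then P i else 0) = μ σ r) →
      ∑ i : (τ : Fin s) → Fin (n τ), P i * Real.log (Nf μ Msb E i
          / Real.exp (-(∑ e ∈ E, C e.1 e.2 (i e.1) (i e.2)) / η)) = cval := by
    intro P hP
    rw [Finset.sum_congr rfl fun i (_ : i ∈ Finset.univ) => by rw [hlogSplit i]]
    have h1 : ∀ i : (τ : Fin s) → Fin (n τ),
        P i * ((∑ e ∈ E, (f e (i e.1) + g e (i e.2)))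
            + ∑ σ, (((1:ℤ) - (degE E σ : ℤ) : ℤ) : ℝ) * Real.log (μ σ (i σ)))
          = (∑ e ∈ E, (P i * f e (i e.1) + P i * g e (i e.2)))
            + ∑ σ, P i * ((((1:ℤ) - (degE E σ : ℤ) : ℤ) : ℝ)
                * Real.log (μ σ (i σ))) := by
      intro i
      rw [mul_add, Finset.mul_sum, Finset.mul_sum]
      congr 1
      exact Finset.sum_congr rfl fun e _ => by ring
    rw [Finset.sum_congr rfl fun i _ => h1 i, Finset.sum_add_distrib, hcval]
    congr 1
    · rw [Finset.sum_comm]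
      refine Finset.sum_congr rfl fun e he => ?_
      rw [Finset.sum_add_distrib, hcoord P hP e.1 (f e), hcoord P hP e.2 (g e)]
    · rw [Finset.sum_comm]
      refine Finset.sum_congr rfl fun σ _ => ?_
      exact hcoord P hP σ
        (fun rr => (((1:ℤ) - (degE E σ : ℤ) : ℤ) : ℝ) * Real.log (μ σ rr))
  -- chain rule for the relative entropy
  have hsplit : ∀ (P : ((σ : Fin s) → Fin (n σ)) → ℝ), (∀ i, 0 ≤ P i) →
      ∀ i : (τ : Fin s) → Fin (n τ),
        P i * Real.log (P i
            / Real.exp (-(∑ e ∈ E, C e.1 e.2 (i e.1) (i e.2)) / η))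
          = P i * Real.log (P i / Nf μ Msb E i)
            + P i * Real.log (Nf μ Msb E i
              / Real.exp (-(∑ e ∈ E, C e.1 e.2 (i e.1) (i e.2)) / η)) := by
    intro P hP0 i
    rcases eq_or_lt_of_le (hP0 i) with h0 | h0
    · rw [← h0]
      simp
    · have hNp := hNpos i
      have hQp : (0:ℝ) < Real.exp (-(∑ e ∈ E, C e.1 e.2 (i e.1) (i e.2)) / η) :=
        Real.exp_pos _
      have hPQ : P i / Real.exp (-(∑ e ∈ E, C e.1 e.2 (i e.1) (i e.2)) / η)
          = (P i / Nf μ Msb E i) * (Nf μ Msb E i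
            / Real.exp (-(∑ e ∈ E, C e.1 e.2 (i e.1) (i e.2)) / η)) := by
        field_simp
      rw [hPQ, Real.log_mul (by positivity) (by positivity), mul_add]
  have hFM : ∑ i : (τ : Fin s) → Fin (n τ), M i * Real.log (M i
        / Real.exp (-(∑ e ∈ E, C e.1 e.2 (i e.1) (i e.2)) / η))
      = (∑ i : (τ : Fin s) → Fin (n τ), M i * Real.log (M i / Nf μ Msb E i))
        + cval := by
    rw [Finset.sum_congr rfl fun i _ => hsplit M hMmem.1 i,
      Finset.sum_add_distrib, hconst M hMmem.2]
  have hFN : ∑ i : (τ : Fin s) → Fin (n τ), Nf μ Msb E i * Real.log (Nf μ Msb E i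
        / Real.exp (-(∑ e ∈ E, C e.1 e.2 (i e.1) (i e.2)) / η)) = cval := by
    rw [Finset.sum_congr rfl fun i _ =>
        hsplit (fun j => Nf μ Msb E j) (fun j => (hNpos j).le) i,
      Finset.sum_add_distrib, hconst _ hNmarg]
    have h0 : ∑ i : (τ : Fin s) → Fin (n τ),
        Nf μ Msb E i * Real.log (Nf μ Msb E i / Nf μ Msb E i) = 0 := by
      refine Finset.sum_eq_zero fun i _ => ?_
      rw [div_self (hNpos i).ne', Real.log_one, mul_zero]
    rw [h0, zero_add]
  have hD0 : ∑ i : (τ : Fin s) → Fin (n τ), M i * Real.log (M i / Nf μ Msb E i)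
      ≤ 0 := by
    have hle := hMopt (fun i => Nf μ Msb E i) ⟨fun i => (hNpos i).le, hNmarg⟩
    rw [hFM] at hle
    simp only [] at hle
    linarith [hFN, hle]
  -- conclude pointwise equality
  have hMN : ∀ j, M j = Nf μ Msb E j := by
    by_contra hcon
    push_neg at hcon
    obtain ⟨j₀, hj₀⟩ := hcon
    have hglb : ∀ j, M j - Nf μ Msb E j ≤ M j * Real.log (M j / Nf μ Msb E j) :=
      fun j => (klg (M j) (Nf μ Msb E j) (hMmem.1 j) (hNpos j)).1
    have hstrict : M j₀ - Nf μ Msb E j₀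
        < M j₀ * Real.log (M j₀ / Nf μ Msb E j₀) :=
      (klg (M j₀) (Nf μ Msb E j₀) (hMmem.1 j₀) (hNpos j₀)).2 hj₀
    have hlt := Finset.sum_lt_sum (fun j (_ : j ∈ Finset.univ) => hglb j)
      ⟨j₀, Finset.mem_univ _, hstrict⟩
    rw [Finset.sum_sub_distrib, hMsum, hNsum] at hlt
    simp only [sub_self] at hlt
    linarith
  -- degree at least one at every vertex
  have hdeg1 : ∀ σ : Fin s, 1 ≤ (E.filter fun e => e.1 = σ ∨ e.2 = σ).card := by
    intro σ
    obtain ⟨τ, hτ⟩ := Fintype.exists_ne_of_one_lt_card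
      (by rw [Fintype.card_fin]; omega) σ
    obtain ⟨w⟩ := htree.1.preconnected σ τ
    cases w with
    | nil => exact absurd rfl hτ.symm
    | cons h w' =>
      rw [SimpleGraph.fromRel_adj] at h
      obtain ⟨-, hor⟩ := h
      apply Finset.card_pos.mpr
      rcases hor with hh | hh
      · exact ⟨_, Finset.mem_filter.mpr ⟨hh, Or.inl rfl⟩⟩
      · exact ⟨_, Finset.mem_filter.mpr ⟨hh, Or.inr rfl⟩⟩
  intro i
  rw [hMN i, Nf]
  have hzp : ∀ σ : Fin s, μ σ (i σ) ^ ((1:ℤ) - (degE E σ : ℤ))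
      = (μ σ (i σ) ^ ((E.filter fun e => e.1 = σ ∨ e.2 = σ).card - 1))⁻¹ := by
    intro σ
    have h1 : ((1:ℤ) - (degE E σ : ℤ))
        = -((((E.filter fun e => e.1 = σ ∨ e.2 = σ).card - 1 : ℕ)) : ℤ) := by
      rw [Nat.cast_sub (hdeg1 σ)]
      show (1:ℤ) - ((E.filter fun e => e.1 = σ ∨ e.2 = σ).card : ℤ) = _
      push_cast
      ring
    rw [h1, zpow_neg, zpow_natCast]
  rw [Finset.prod_congr rfl fun σ _ => hzp σ, Finset.prod_inv_distrib]
  exact (div_eq_mul_inv _ _).symm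
end
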